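/- arXiv:1812.01163 — 9 statements merged into one kernel-verified Lean document; each statement's English description precedes it below -/
import Mathlib

section
/- Let T_m denote the m-th Chebyshev polynomial of the first kind. For n ≥ 4 and m = ⌈(1/2)√n(log₂(n)+1)⌉, |T_m(-1 - 2/n)| ≥ n. -/
lemma cheb_closed_form (x s t : ℝ) (hst : s * t = 1) (hsum : s + t = 2 * x) :
    ∀ m : ℕ, (Polynomial.Chebyshev.T ℝ m).eval x = (s ^ m + t ^ m) / 2 := by
  intro m
  induction m using Nat.strong_induction_on with
  | _ m ih =>
    match m with
    | 0 => simp
    | 1 => simp [Polynomial.Chebyshev.T_one]; linarith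
    | (m+2) =>
      have h1 := ih m (by omega)
      have h2 := ih (m+1) (by omega)
      have hcast : ((m+2 : ℕ) : ℤ) = (m:ℤ) + 2 := by push_cast; ring
      rw [hcast, Polynomial.Chebyshev.T_add_two]
      simp only [Polynomial.eval_sub, Polynomial.eval_mul, Polynomial.eval_ofNat,
        Polynomial.eval_X]
      rw [show ((m:ℤ)+1) = ((m+1:ℕ):ℤ) by push_cast; ring, h2, h1]
      have key : s^(m+2)+t^(m+2) = (s+t)*(s^(m+1)+t^(m+1)) - (s*t)*(s^m+t^m) := by ring
      rw [hsum, hst] at key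
      rw [key]; ring

theorem chebyshev_large_at_shifted_point (n : ℕ) (hn : 4 ≤ n)
    (m : ℕ) (hm : m = ⌈(1 / 2 : ℝ) * Real.sqrt n * (Real.logb 2 n + 1)⌉₊) :
    |(Polynomial.Chebyshev.T ℝ m).eval (-1 - 2 / (n : ℝ))| ≥ n := by
  set N : ℝ := (n : ℝ) with hN
  have hN4 : (4:ℝ) ≤ N := by rw [hN]; exact_mod_cast hn
  have hNpos : (0:ℝ) < N := by linarith
  have hsqN : (2:ℝ) ≤ Real.sqrt N := by
    rw [show (2:ℝ) = Real.sqrt 4 by rw [show (4:ℝ) = 2^2 by norm_num, Real.sqrt_sq]; norm_num]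
    exact Real.sqrt_le_sqrt hN4
  have hsqNpos : (0:ℝ) < Real.sqrt N := by linarith
  have hsqN_sq : Real.sqrt N ^ 2 = N := Real.sq_sqrt hNpos.le
  set u : ℝ := Real.sqrt (4/N + 4/N^2) with hu
  have hu_sq : u ^ 2 = 4/N + 4/N^2 := Real.sq_sqrt (by positivity)
  have hupos : 0 < u := Real.sqrt_pos.mpr (by positivity)
  set b : ℝ := 1 + 2/N + u with hb
  set a : ℝ := 1 + 2/N - u with ha
  have hbpos : 0 < b := by positivity
  have hab : a * b = 1 := by
    have : a * b = (1 + 2/N)^2 - u^2 := by ring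
    rw [this, hu_sq]; field_simp; ring
  have hapos : 0 < a := by
    by_contra h
    push_neg at h
    nlinarith
  -- closed form
  have hform := cheb_closed_form (-1 - 2/N) (-a) (-b)
    (by rw [show -a * -b = a*b by ring, hab])
    (by rw [ha, hb]; ring) m
  rw [hform]
  have hsign : (-a)^m + (-b)^m = (-1)^m * (a^m + b^m) := by
    rw [neg_pow a, neg_pow b, mul_add]
  rw [hsign]
  rw [abs_div, abs_mul, abs_pow, abs_neg, abs_one, one_pow, one_mul,
    abs_of_nonneg (by positivity : (0:ℝ) ≤ a^m + b^m), abs_of_nonneg (by norm_num : (0:ℝ) ≤ 2)]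
  -- key bound: b ≥ 1 + c where c = 2/√N
  set c : ℝ := 2 / Real.sqrt N with hc
  have hcpos : 0 < c := by positivity
  have hc1 : c ≤ 1 := by
    rw [hc, div_le_one hsqNpos]; linarith
  have hcu : c ≤ u := by
    rw [hu]
    apply (Real.le_sqrt' hcpos).mpr
    have hcsq : c^2 = 4/N := by rw [hc, div_pow, hsqN_sq]; norm_num
    have : (0:ℝ) < 4/N^2 := by positivity
    linarith
  have hbc : 1 + c ≤ b := by
    rw [hb]
    have : 0 < 2/N := by positivity
    linarith
  -- exp convexity: 2^c ≤ 1+c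
  have hexp : Real.exp (c * Real.log 2) ≤ 1 + c := by
    have := convexOn_exp.2 (Set.mem_univ (0:ℝ)) (Set.mem_univ (Real.log 2))
      (by linarith : (0:ℝ) ≤ 1 - c) hcpos.le (by ring)
    simp only [smul_eq_mul, mul_zero, zero_add, Real.exp_zero, Real.exp_log two_pos] at this
    calc Real.exp (c * Real.log 2) ≤ (1-c)*1 + c*2 := this
      _ = 1 + c := by ring
  have hlog2pos : (0:ℝ) < Real.log 2 := Real.log_pos (by norm_num)
  have hlogc : c * Real.log 2 ≤ Real.log (1 + c) := by
    have := Real.log_le_log (by positivity) hexp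
    rwa [Real.log_exp] at this
  -- m lower bound
  have hmle : (1 / 2 : ℝ) * Real.sqrt N * (Real.logb 2 N + 1) ≤ (m : ℝ) := by
    rw [hm]; exact Nat.le_ceil _
  have hlogb : Real.logb 2 N = Real.log N / Real.log 2 := rfl
  -- log(2N) ≤ m * log(1+c)
  have hkey : Real.log (2 * N) ≤ (m:ℝ) * Real.log (1 + c) := by
    have h1 : (1 / 2 : ℝ) * Real.sqrt N * (Real.logb 2 N + 1) * (c * Real.log 2)
        = Real.log N + Real.log 2 := by
      rw [hlogb, hc]
      field_simp
    have h2 : Real.log (2*N) = Real.log 2 + Real.log N :=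
      Real.log_mul (by norm_num) (by positivity)
    have h3 : (1 / 2 : ℝ) * Real.sqrt N * (Real.logb 2 N + 1) * (c * Real.log 2)
        ≤ (m:ℝ) * (c * Real.log 2) := by
      apply mul_le_mul_of_nonneg_right hmle (by positivity)
    have h4 : (m:ℝ) * (c * Real.log 2) ≤ (m:ℝ) * Real.log (1+c) :=
      mul_le_mul_of_nonneg_left hlogc (by positivity)
    linarith
  have h2N : 2 * N ≤ (1 + c) ^ m := by
    have hlogpow : Real.log ((1+c)^m) = (m:ℝ) * Real.log (1+c) := by
      rw [Real.log_pow]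
    have := Real.exp_le_exp.mpr hkey
    rw [Real.exp_log (by positivity : (0:ℝ) < 2*N)] at this
    rw [← hlogpow, Real.exp_log (by positivity : (0:ℝ) < (1+c)^m)] at this
    exact this
  have hbm : (1 + c) ^ m ≤ b ^ m := pow_le_pow_left₀ (by positivity) hbc m
  have ham : 0 ≤ a ^ m := by positivity
  rw [ge_iff_le, le_div_iff₀ (by norm_num : (0:ℝ) < 2)]
  show N * 2 ≤ _
  linarith
end

section
/- For n ≥ 4 there exists a polynomial g of one real variable of degree ⌈(1/2)√n(log₂(n)+1)⌉ such that the average of w·g(w)² over w ranging uniformly over the integers {-1, 0, 1, ..., n-2} is strictly negative. -/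
open Polynomial Polynomial.Chebyshev Real

lemma cheb_deg : ∀ m : ℕ, (T ℝ m).degree = m ∧ (T ℝ (m+1)).degree = (m+1 : ℕ) := by
  intro m
  induction m with
  | zero =>
    refine ⟨?_, ?_⟩
    · rw [show ((0:ℕ):ℤ) = 0 by norm_num, T_zero]; simpa using degree_one
    · rw [show (((0:ℕ):ℤ)+1) = 1 by norm_num, T_one]; simpa using degree_X
  | succ k ih =>
    obtain ⟨h1, h2⟩ := ih
    refine ⟨h2, ?_⟩
    have hrec : T ℝ ((k:ℤ) + 2) = 2 * X * T ℝ (k+1) - T ℝ k := T_add_two ℝ k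
    have hdm : (2 * X * T ℝ (k+1)).degree = ((k+2 : ℕ) : WithBot ℕ) := by
      have h2X : (2 * X : ℝ[X]).degree = 1 := by
        rw [show (2 * X : ℝ[X]) = C 2 * X by rw [map_ofNat], degree_C_mul_X two_ne_zero]
      rw [degree_mul, h2X, h2]
      rw [show ((k+2:ℕ) : WithBot ℕ) = ((k+1:ℕ) : WithBot ℕ) + 1 by exact_mod_cast rfl]
      exact add_comm _ _
    have hlt : (T ℝ k).degree < (2 * X * T ℝ (k+1)).degree := by
      rw [hdm, h1]
      exact_mod_cast Nat.lt_succ_of_lt (Nat.lt_succ_self k)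
    have h3 : (T ℝ ((k:ℤ) + 2)).degree = ((k+2:ℕ) : WithBot ℕ) := by
      rw [hrec, degree_sub_eq_left_of_degree_lt hlt, hdm]
    have hcast : ((k:ℤ) + 2) = (((k+1)+1 : ℕ) : ℤ) := by push_cast; ring
    rw [hcast] at h3
    exact h3

lemma cheb_eval (u : ℝ) (hu : u ≠ 0) :
    ∀ m : ℕ, (T ℝ m).eval ((u + u⁻¹)/2) = (u^m + u⁻¹^m)/2 ∧
      (T ℝ (m+1)).eval ((u + u⁻¹)/2) = (u^(m+1) + u⁻¹^(m+1))/2 := by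
  intro m
  induction m with
  | zero =>
    refine ⟨?_, ?_⟩
    · rw [show ((0:ℕ):ℤ) = 0 by norm_num, T_zero]; simp
    · rw [show (((0:ℕ):ℤ)+1) = 1 by norm_num, T_one]; simp
  | succ k ih =>
    obtain ⟨h1, h2⟩ := ih
    refine ⟨h2, ?_⟩
    have hrec : T ℝ ((k:ℤ) + 2) = 2 * X * T ℝ (k+1) - T ℝ k := T_add_two ℝ k
    have hcast : (((k+1:ℕ)) : ℤ) + 1 = ((k:ℤ) + 2) := by push_cast; ring
    rw [hcast, hrec]
    simp only [eval_sub, eval_mul, eval_X, eval_ofNat, h1, h2]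
    field_simp
    linear_combination (u * u⁻¹ ^ k - u⁻¹ * u⁻¹ ^ k) * (mul_inv_cancel₀ hu)

lemma cheb_bound (m : ℕ) (y : ℝ) (h1 : -1 ≤ y) (h2 : y ≤ 1) : |(T ℝ m).eval y| ≤ 1 := by
  have h := T_real_cos (Real.arccos y) m
  rw [Real.cos_arccos h1 h2] at h
  rw [h]
  exact Real.abs_cos_le_one _


set_option maxHeartbeats 1000000 in
theorem exists_poly_negative_expectation (n : ℕ) (hn : 4 ≤ n) :
    ∃ g : Polynomial ℝ,
      g.natDegree = ⌈(1 / 2 : ℝ) * Real.sqrt n * (Real.logb 2 n + 1)⌉₊ ∧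
      ∑ w ∈ Finset.Icc (-1 : ℤ) ((n : ℤ) - 2), (w : ℝ) * (g.eval (w : ℝ)) ^ 2 < 0 := by
  set m := ⌈(1 / 2 : ℝ) * Real.sqrt n * (Real.logb 2 n + 1)⌉₊ with hm_def
  set nr : ℝ := (n : ℝ) with hnr_def
  have hnr4 : (4:ℝ) ≤ nr := by rw [hnr_def]; exact_mod_cast hn
  set N : ℝ := nr - 2 with hN_def
  have hN0 : 0 < N := by simp only [hN_def]; linarith
  set c : ℝ := 2 / N with hc_def
  have hc0 : 0 < c := by positivity
  set ℓ : Polynomial ℝ := C (-c) * X + C 1 with hl_def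
  refine ⟨(T ℝ m).comp ℓ, ?_, ?_⟩
  · rw [natDegree_comp, natDegree_linear (by simp [hc_def]; positivity),
      natDegree_eq_of_degree_eq_some (cheb_deg m).1, mul_one]
  -- evaluation of ℓ
  have hleval : ∀ x : ℝ, ℓ.eval x = 1 - c * x := by
    intro x; simp [hl_def]; ring
  -- split the sum
  have hsplit : Finset.Icc (-1:ℤ) ((n:ℤ)-2) = insert (-1) (Finset.Icc 0 ((n:ℤ)-2)) := by
    ext x; simp only [Finset.mem_Icc, Finset.mem_insert]; omega
  rw [hsplit, Finset.sum_insert (by simp)]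
  -- the scaling point
  set s : ℝ := Real.sqrt nr with hs_def
  have hs2 : 2 ≤ s := by
    rw [hs_def, show (2:ℝ) = Real.sqrt 4 by
      rw [show (4:ℝ) = 2^2 by norm_num, Real.sqrt_sq (by norm_num)]]
    exact Real.sqrt_le_sqrt hnr4
  have hs0 : 0 < s := by linarith
  set t : ℝ := Real.sqrt (nr - 1) with ht_def
  have ht2 : t^2 = nr - 1 := Real.sq_sqrt (by linarith)
  have ht0 : 0 ≤ t := Real.sqrt_nonneg _
  set u : ℝ := (nr + 2*t)/N with hu_def
  have hu0 : 0 < u := by apply div_pos (by linarith) hN0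
  -- quadratic relation
  have hq : u * (2*(1+c) - u) = 1 := by
    rw [hu_def, hc_def]
    field_simp
    nlinarith [ht2]
  have hinv : u⁻¹ = 2*(1+c) - u := inv_eq_of_mul_eq_one_right hq
  have hx : (u + u⁻¹)/2 = 1 + c := by rw [hinv]; ring
  -- lower bound on u
  have htsN : N ≤ t * s := by
    have h1 : t * s = Real.sqrt ((nr-1)*nr) := by
      rw [ht_def, hs_def, ← Real.sqrt_mul (by linarith)]
    have h2 : N = Real.sqrt (N^2) := (Real.sqrt_sq hN0.le).symm
    rw [h1, h2]
    apply Real.sqrt_le_sqrt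
    nlinarith
  set a : ℝ := 2/s with ha_def
  have ha0 : 0 < a := by positivity
  have ha1 : a ≤ 1 := by rw [ha_def, div_le_one hs0]; linarith
  have hua : 1 + a ≤ u := by
    rw [hu_def, le_div_iff₀ hN0, ← mul_le_mul_iff_of_pos_right hs0]
    have e : (1+a)*N*s = N*s + 2*N := by rw [ha_def]; field_simp
    rw [e]
    have h1 : N*s ≤ nr*s := mul_le_mul_of_nonneg_right (by rw [hN_def]; linarith) hs0.le
    have h2 : 2*N ≤ 2*(t*s) := by linarith
    nlinarith
  -- exp bound : exp (a * log 2) ≤ 1 + a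
  have hexp2 : Real.exp (a * Real.log 2) ≤ 1 + a := by
    have hc' := convexOn_exp.2 (Set.mem_univ (0:ℝ)) (Set.mem_univ (Real.log 2))
      (by linarith : (0:ℝ) ≤ 1 - a) ha0.le (by ring)
    simp only [smul_eq_mul, mul_zero, zero_add, Real.exp_zero, mul_one,
      Real.exp_log two_pos] at hc'
    linarith
  -- m * a ≥ logb 2 n + 1
  set L : ℝ := Real.logb 2 nr with hL_def
  have hL0 : 0 ≤ L := Real.logb_nonneg (by norm_num) (by linarith)
  have hma : L + 1 ≤ (m:ℝ) * a := by
    have h1 : (1 / 2 : ℝ) * s * (L + 1) ≤ (m:ℝ) := Nat.le_ceil _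
    have h2 : (1 / 2 : ℝ) * s * (L + 1) * a = L + 1 := by
      rw [ha_def]; field_simp
    calc L + 1 = (1 / 2 : ℝ) * s * (L + 1) * a := h2.symm
      _ ≤ (m:ℝ) * a := mul_le_mul_of_nonneg_right h1 ha0.le
  -- main lower bound on g(-1)
  have hgm1 : ((T ℝ m).comp ℓ).eval (-1) = (u^m + u⁻¹^m)/2 := by
    rw [eval_comp, hleval, show (1 - c * (-1)) = (u + u⁻¹)/2 by rw [hx]; try ring]
    exact (cheb_eval u hu0.ne' m).1
  have hun : 2 * nr ≤ u^m := by
    have e1 : Real.exp ((m:ℝ) * (a * Real.log 2)) = (Real.exp (a * Real.log 2))^m := by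
      rw [← Real.exp_nat_mul]
    have e2 : Real.exp ((L+1) * Real.log 2) = 2 * nr := by
      rw [add_mul, one_mul, Real.exp_add, hL_def, Real.logb,
        div_mul_cancel₀ _ (Real.log_ne_zero_of_pos_of_ne_one two_pos (by norm_num)),
        Real.exp_log (by linarith), Real.exp_log two_pos]
      ring
    have e3 : Real.exp ((L+1) * Real.log 2) ≤ Real.exp ((m:ℝ) * (a * Real.log 2)) := by
      apply Real.exp_le_exp.2
      rw [← mul_assoc]
      exact mul_le_mul_of_nonneg_right hma (Real.log_nonneg (by norm_num))
    have e4 : (Real.exp (a * Real.log 2))^m ≤ (1+a)^m :=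
      pow_le_pow_left₀ (Real.exp_pos _).le hexp2 m
    have e5 : (1+a)^m ≤ u^m := pow_le_pow_left₀ (by linarith) hua m
    calc 2 * nr = Real.exp ((L+1) * Real.log 2) := e2.symm
      _ ≤ Real.exp ((m:ℝ) * (a * Real.log 2)) := e3
      _ = (Real.exp (a * Real.log 2))^m := e1
      _ ≤ (1+a)^m := e4
      _ ≤ u^m := e5
  have hgn : nr ≤ ((T ℝ m).comp ℓ).eval (-1) := by
    rw [hgm1]
    have : (0:ℝ) ≤ u⁻¹^m := by positivity
    linarith
  -- bound the nonnegative part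
  have hbound : ∀ w ∈ Finset.Icc (0:ℤ) ((n:ℤ)-2),
      (w : ℝ) * (((T ℝ m).comp ℓ).eval (w:ℝ)) ^ 2 ≤ N := by
    intro w hw
    rw [Finset.mem_Icc] at hw
    have hw0 : (0:ℝ) ≤ (w:ℝ) := by exact_mod_cast hw.1
    have hwN : (w:ℝ) ≤ N := by
      rw [hN_def]; push_cast
      have : (w:ℝ) ≤ (n:ℝ) - 2 := by exact_mod_cast hw.2
      linarith
    have hy1 : -1 ≤ 1 - c * (w:ℝ) := by
      have : c * (w:ℝ) ≤ c * N := mul_le_mul_of_nonneg_left hwN hc0.le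
      have hcN : c * N = 2 := by rw [hc_def]; field_simp
      linarith
    have hy2 : 1 - c * (w:ℝ) ≤ 1 := by nlinarith [mul_nonneg hc0.le hw0]
    have habs : |(((T ℝ m).comp ℓ)).eval (w:ℝ)| ≤ 1 := by
      rw [eval_comp, hleval]
      exact cheb_bound m _ hy1 hy2
    have hsq : (((T ℝ m).comp ℓ).eval (w:ℝ))^2 ≤ 1 := by
      rw [← one_pow 2]; exact sq_le_sq' (by linarith [abs_le.1 habs]) (abs_le.1 habs).2
    calc (w : ℝ) * (((T ℝ m).comp ℓ).eval (w:ℝ)) ^ 2 ≤ (w:ℝ) * 1 :=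
          mul_le_mul_of_nonneg_left hsq hw0
      _ = (w:ℝ) := mul_one _
      _ ≤ N := hwN
  have hsum : ∑ w ∈ Finset.Icc (0:ℤ) ((n:ℤ)-2),
      (w : ℝ) * (((T ℝ m).comp ℓ).eval (w:ℝ)) ^ 2 ≤ ((n-1 : ℕ) : ℝ) * N := by
    have hcard : (Finset.Icc (0:ℤ) ((n:ℤ)-2)).card = n - 1 := by
      rw [Int.card_Icc]; omega
    calc ∑ w ∈ Finset.Icc (0:ℤ) ((n:ℤ)-2), (w : ℝ) * (((T ℝ m).comp ℓ).eval (w:ℝ)) ^ 2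
        ≤ (Finset.Icc (0:ℤ) ((n:ℤ)-2)).card • N := Finset.sum_le_card_nsmul _ _ _ hbound
      _ = ((n-1:ℕ) : ℝ) * N := by rw [hcard, nsmul_eq_mul]
  -- conclude
  have hn1 : ((n-1:ℕ) : ℝ) = nr - 1 := by
    rw [hnr_def]; push_cast [Nat.cast_sub (by omega : 1 ≤ n)]; ring
  have hterm : ((-1:ℤ) : ℝ) * (((T ℝ m).comp ℓ).eval ((-1:ℤ):ℝ)) ^ 2 ≤ - nr^2 := by
    rw [show ((-1:ℤ):ℝ) = -1 by norm_num]
    nlinarith [hgn, hnr4]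
  have hlt : ((n-1:ℕ):ℝ) * N < nr^2 := by
    rw [hn1, hN_def]; nlinarith
  linarith [hterm, hsum, hlt]
end

section
/- Let h_k(x) = (1/√(k!·(k+1)!)) · Σ_{j=0}^k (-1)^(k-j) · binomial(k,j) · ((k+1)!/(j+1)!) · x^j. Then for all k ∈ ℕ and all real x, |h_k(x)| ≤ √(k+1) · e^(k·|x|). -/
noncomputable def h (k : ℕ) (x : ℝ) : ℝ :=
  (1 / Real.sqrt ((Nat.factorial k : ℝ) * (Nat.factorial (k + 1) : ℝ))) *
    ∑ j ∈ Finset.range (k + 1),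
      (-1 : ℝ) ^ (k - j) * (Nat.choose k j : ℝ) *
        ((Nat.factorial (k + 1) : ℝ) / (Nat.factorial (j + 1) : ℝ)) * x ^ j

theorem h_abs_bound (k : ℕ) (x : ℝ) :
    |h k x| ≤ Real.sqrt (k + 1) * Real.exp (k * |x|) := by
  have hFk : (0:ℝ) < (Nat.factorial k : ℝ) := by exact_mod_cast Nat.factorial_pos k
  have hFk1 : (0:ℝ) < (Nat.factorial (k+1) : ℝ) := by exact_mod_cast Nat.factorial_pos (k+1)
  have hprod : (0:ℝ) < (Nat.factorial k : ℝ) * (Nat.factorial (k+1) : ℝ) := mul_pos hFk hFk1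
  have hsqrt : (0:ℝ) < Real.sqrt ((Nat.factorial k : ℝ) * (Nat.factorial (k+1) : ℝ)) :=
    Real.sqrt_pos.mpr hprod
  -- bound the sum
  have hsum : |∑ j ∈ Finset.range (k + 1),
      (-1 : ℝ) ^ (k - j) * (Nat.choose k j : ℝ) *
        ((Nat.factorial (k + 1) : ℝ) / (Nat.factorial (j + 1) : ℝ)) * x ^ j|
      ≤ (Nat.factorial (k+1) : ℝ) * Real.exp (k * |x|) := by
    calc |∑ j ∈ Finset.range (k + 1),
        (-1 : ℝ) ^ (k - j) * (Nat.choose k j : ℝ) *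
          ((Nat.factorial (k + 1) : ℝ) / (Nat.factorial (j + 1) : ℝ)) * x ^ j|
        ≤ ∑ j ∈ Finset.range (k + 1), |(-1 : ℝ) ^ (k - j) * (Nat.choose k j : ℝ) *
          ((Nat.factorial (k + 1) : ℝ) / (Nat.factorial (j + 1) : ℝ)) * x ^ j| :=
        Finset.abs_sum_le_sum_abs _ _
      _ ≤ ∑ j ∈ Finset.range (k + 1),
          (Nat.factorial (k+1) : ℝ) * (((k:ℝ) * |x|) ^ j / (Nat.factorial j : ℝ)) := by
          apply Finset.sum_le_sum
          intro j hj
          have hFj : (0:ℝ) < (Nat.factorial j : ℝ) := by exact_mod_cast Nat.factorial_pos j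
          have hFj1 : (0:ℝ) < (Nat.factorial (j+1) : ℝ) := by exact_mod_cast Nat.factorial_pos (j+1)
          rw [abs_mul, abs_mul, abs_mul, abs_pow, abs_neg, abs_one, one_pow, one_mul,
            Nat.abs_cast, abs_div, Nat.abs_cast, Nat.abs_cast, abs_pow]
          calc (Nat.choose k j : ℝ) *
                ((Nat.factorial (k+1) : ℝ) / (Nat.factorial (j+1) : ℝ)) * |x|^j
              ≤ (k:ℝ)^j * ((Nat.factorial (k+1) : ℝ) / (Nat.factorial j : ℝ)) * |x|^j := by
                gcongr
                · exact_mod_cast Nat.choose_le_pow k j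
                · exact Nat.le_succ j
            _ = (Nat.factorial (k+1) : ℝ) * (((k:ℝ) * |x|) ^ j / (Nat.factorial j : ℝ)) := by
                rw [mul_pow]; ring
      _ = (Nat.factorial (k+1) : ℝ) * ∑ j ∈ Finset.range (k + 1),
            ((k:ℝ) * |x|) ^ j / (Nat.factorial j : ℝ) := by rw [Finset.mul_sum]
      _ ≤ (Nat.factorial (k+1) : ℝ) * Real.exp (k * |x|) := by
          apply mul_le_mul_of_nonneg_left _ hFk1.le
          exact Real.sum_le_exp_of_nonneg (by positivity) (k+1)
  -- combine
  have key : Real.sqrt ((k:ℝ) + 1) =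
      (Nat.factorial (k+1) : ℝ) /
        Real.sqrt ((Nat.factorial k : ℝ) * (Nat.factorial (k+1) : ℝ)) := by
    rw [eq_div_iff hsqrt.ne', ← Real.sqrt_mul (by positivity)]
    have : ((k:ℝ) + 1) * ((Nat.factorial k : ℝ) * (Nat.factorial (k+1) : ℝ)) =
        ((Nat.factorial (k+1) : ℝ)) ^ 2 := by
      have : (Nat.factorial (k+1) : ℝ) = ((k:ℝ)+1) * (Nat.factorial k : ℝ) := by
        push_cast [Nat.factorial_succ]; ring
      rw [this]; ring
    rw [this, Real.sqrt_sq hFk1.le]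
  rw [h, abs_mul, abs_of_pos (by positivity :
      (0:ℝ) < 1 / Real.sqrt ((Nat.factorial k : ℝ) * (Nat.factorial (k+1) : ℝ))), key]
  calc (1 / Real.sqrt ((Nat.factorial k : ℝ) * (Nat.factorial (k+1) : ℝ))) *
        |∑ j ∈ Finset.range (k + 1),
          (-1 : ℝ) ^ (k - j) * (Nat.choose k j : ℝ) *
            ((Nat.factorial (k + 1) : ℝ) / (Nat.factorial (j + 1) : ℝ)) * x ^ j|
      ≤ (1 / Real.sqrt ((Nat.factorial k : ℝ) * (Nat.factorial (k+1) : ℝ))) *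
        ((Nat.factorial (k+1) : ℝ) * Real.exp (k * |x|)) :=
        mul_le_mul_of_nonneg_left hsum (by positivity)
    _ = (Nat.factorial (k+1) : ℝ) /
        Real.sqrt ((Nat.factorial k : ℝ) * (Nat.factorial (k+1) : ℝ)) *
          Real.exp (k * |x|) := by ring
end

section
/- Let h_k(x) = (1/√(k!·(k+1)!)) · Σ_{j=0}^k (-1)^(k-j) · binomial(k,j) · ((k+1)!/(j+1)!) · x^j. The derivative satisfies h_k'(x) = Σ_{k'=0}^{k-1} (-1)^(k-1-k') · (k!/k'!) · (√(k'!·(k'+1)!)/√(k!·(k+1)!)) · h_{k'}(x). -/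
open Finset Nat

-- key combinatorial identity
lemma key (k j : ℕ) (hj : j < k) :
    ((j:ℝ)+1) * (k.choose (j+1)) * ((Nat.factorial (k+1) : ℝ) / (Nat.factorial (j+2) : ℝ))
      = ∑ k' ∈ Finset.Ico j k, ((Nat.factorial k : ℝ)/(Nat.factorial k' : ℝ)) * (k'.choose j : ℝ) *
          ((Nat.factorial (k'+1) : ℝ)/(Nat.factorial (j+1) : ℝ)) := by
  have hterm : ∀ k' ∈ Finset.Ico j k,
      ((Nat.factorial k : ℝ)/(Nat.factorial k' : ℝ)) * (k'.choose j : ℝ) *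
        ((Nat.factorial (k'+1) : ℝ)/(Nat.factorial (j+1) : ℝ))
      = (Nat.factorial k : ℝ) * ((j:ℝ)+1) * ((k'+1).choose (j+1) : ℝ) / (Nat.factorial (j+1) : ℝ) := by
    intro k' _
    have h1 : ((k'+1:ℕ) : ℝ) * (k'.choose j : ℝ) = ((k'+1).choose (j+1) : ℝ) * ((j:ℝ)+1) := by
      have := Nat.add_one_mul_choose_eq k' j
      exact_mod_cast congrArg (Nat.cast : ℕ → ℝ) this
    have h2 : (Nat.factorial (k'+1) : ℝ) = ((k'+1:ℕ) : ℝ) * (Nat.factorial k' : ℝ) := by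
      push_cast [Nat.factorial_succ]; ring
    have hk' : (Nat.factorial k' : ℝ) ≠ 0 := by positivity
    have h1' : ((k':ℝ)+1) * (k'.choose j : ℝ) = ((k'+1).choose (j+1) : ℝ) * ((j:ℝ)+1) := by push_cast at h1 ⊢; linarith [h1]
    field_simp [h2]
    linear_combination (Nat.factorial k' : ℝ) * h1 + (k'.choose j : ℝ) * h2
  rw [Finset.sum_congr rfl hterm]
  have hsum : ∑ k' ∈ Finset.Ico j k, (((k'+1).choose (j+1) : ℕ) : ℝ) = (((k+1).choose (j+2) : ℕ) : ℝ) := by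
    rw [← Nat.cast_sum]
    congr 1
    have : ∑ k' ∈ Finset.Ico j k, (k'+1).choose (j+1) = ∑ m ∈ Finset.Ico (j+1) (k+1), m.choose (j+1) := by
      rw [Finset.sum_Ico_eq_sum_range, Finset.sum_Ico_eq_sum_range]
      simp [Nat.add_sub_add_right]
      apply Finset.sum_congr rfl
      intro i _
      congr 1
      omega
    rw [this, Finset.Ico_add_one_right_eq_Icc, Nat.sum_Icc_choose]
  have : ∑ k' ∈ Finset.Ico j k, (Nat.factorial k : ℝ) * ((j:ℝ)+1) * ((k'+1).choose (j+1) : ℝ) / (Nat.factorial (j+1) : ℝ)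
      = (Nat.factorial k : ℝ) * ((j:ℝ)+1) * (((k+1).choose (j+2) : ℕ) : ℝ) / (Nat.factorial (j+1) : ℝ) := by
    rw [← Finset.sum_div, ← Finset.mul_sum, hsum]
  rw [this]
  -- final identity
  have hA : k.choose (j+1) * (j+1).factorial * (k-(j+1)).factorial = k.factorial :=
    Nat.choose_mul_factorial_mul_factorial (by omega)
  have hB : (k+1).choose (j+2) * (j+2).factorial * (k+1-(j+2)).factorial = (k+1).factorial :=
    Nat.choose_mul_factorial_mul_factorial (by omega)
  have hnat : k.choose (j+1) * (k+1).factorial * (j+1).factorial = k.factorial * ((k+1).choose (j+2)) * (j+2).factorial := by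
    have hpos : 0 < (k-(j+1)).factorial := Nat.factorial_pos _
    apply Nat.eq_of_mul_eq_mul_right hpos
    have e : k+1-(j+2) = k-(j+1) := by omega
    calc k.choose (j+1) * (k+1).factorial * (j+1).factorial * (k-(j+1)).factorial
        = (k+1).factorial * (k.choose (j+1) * (j+1).factorial * (k-(j+1)).factorial) := by ring
      _ = (k+1).factorial * k.factorial := by rw [hA]
      _ = k.factorial * ((k+1).choose (j+2)) * (j+2).factorial * (k-(j+1)).factorial := by rw [← e, ← hB]; ring
  have hcast : (k.choose (j+1) : ℝ) * (Nat.factorial (k+1) : ℝ) * (Nat.factorial (j+1) : ℝ)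
      = (Nat.factorial k : ℝ) * ((k+1).choose (j+2) : ℝ) * (Nat.factorial (j+2) : ℝ) := by
    exact_mod_cast congrArg (Nat.cast : ℕ → ℝ) hnat
  have d1 : (Nat.factorial (j+2) : ℝ) ≠ 0 := by positivity
  have d2 : (Nat.factorial (j+1) : ℝ) ≠ 0 := by positivity
  field_simp
  linear_combination hcast


lemma h_hasDerivAt (k : ℕ) (x : ℝ) :
    HasDerivAt (h k)
      (∑ j ∈ Finset.range k,
        (1 / Real.sqrt ((Nat.factorial k : ℝ) * (Nat.factorial (k + 1) : ℝ))) *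
          ((-1 : ℝ) ^ (k - (j+1)) * (Nat.choose k (j+1) : ℝ) *
            ((Nat.factorial (k + 1) : ℝ) / (Nat.factorial (j + 2) : ℝ)) * (((j:ℝ)+1) * x ^ j))) x := by
  have hsum : HasDerivAt (fun y : ℝ => ∑ j ∈ Finset.range (k+1),
      (-1 : ℝ) ^ (k - j) * (Nat.choose k j : ℝ) *
        ((Nat.factorial (k + 1) : ℝ) / (Nat.factorial (j + 1) : ℝ)) * y ^ j)
      (∑ j ∈ Finset.range (k+1),
      (-1 : ℝ) ^ (k - j) * (Nat.choose k j : ℝ) *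
        ((Nat.factorial (k + 1) : ℝ) / (Nat.factorial (j + 1) : ℝ)) * ((j:ℝ) * x ^ (j-1))) x := by
    apply HasDerivAt.fun_sum
    intro j _
    simpa [mul_assoc] using (hasDerivAt_pow j x).const_mul
      ((-1 : ℝ) ^ (k - j) * (Nat.choose k j : ℝ) *
        ((Nat.factorial (k + 1) : ℝ) / (Nat.factorial (j + 1) : ℝ)))
  have h2 := hsum.const_mul (1 / Real.sqrt ((Nat.factorial k : ℝ) * (Nat.factorial (k + 1) : ℝ)))
  have hfun : (fun y : ℝ => (1 / Real.sqrt ((Nat.factorial k : ℝ) * (Nat.factorial (k + 1) : ℝ))) *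
      ∑ j ∈ Finset.range (k+1),
      (-1 : ℝ) ^ (k - j) * (Nat.choose k j : ℝ) *
        ((Nat.factorial (k + 1) : ℝ) / (Nat.factorial (j + 1) : ℝ)) * y ^ j) = h k := rfl
  rw [hfun] at h2
  have hval : (1 / Real.sqrt ((Nat.factorial k : ℝ) * (Nat.factorial (k + 1) : ℝ))) *
      (∑ j ∈ Finset.range (k+1),
      (-1 : ℝ) ^ (k - j) * (Nat.choose k j : ℝ) *
        ((Nat.factorial (k + 1) : ℝ) / (Nat.factorial (j + 1) : ℝ)) * ((j:ℝ) * x ^ (j-1)))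
      = ∑ j ∈ Finset.range k,
        (1 / Real.sqrt ((Nat.factorial k : ℝ) * (Nat.factorial (k + 1) : ℝ))) *
          ((-1 : ℝ) ^ (k - (j+1)) * (Nat.choose k (j+1) : ℝ) *
            ((Nat.factorial (k + 1) : ℝ) / (Nat.factorial (j + 2) : ℝ)) * (((j:ℝ)+1) * x ^ j)) := by
    rw [Finset.sum_range_succ']
    push_cast
    simp [Finset.mul_sum]
  rw [hval] at h2
  exact h2


theorem h_deriv (k : ℕ) (x : ℝ) :
    deriv (h k) x =
      ∑ k' ∈ Finset.range k,
        (-1 : ℝ) ^ (k - 1 - k') * ((Nat.factorial k : ℝ) / (Nat.factorial k' : ℝ)) *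
          (Real.sqrt ((Nat.factorial k' : ℝ) * (Nat.factorial (k' + 1) : ℝ)) /
            Real.sqrt ((Nat.factorial k : ℝ) * (Nat.factorial (k + 1) : ℝ))) * h k' x := by
  have hDer := (h_hasDerivAt k x).deriv
  rw [hDer]
  -- rewrite RHS terms
  have hrhs : ∀ k' ∈ Finset.range k,
      (-1 : ℝ) ^ (k - 1 - k') * ((Nat.factorial k : ℝ) / (Nat.factorial k' : ℝ)) *
        (Real.sqrt ((Nat.factorial k' : ℝ) * (Nat.factorial (k' + 1) : ℝ)) /
          Real.sqrt ((Nat.factorial k : ℝ) * (Nat.factorial (k + 1) : ℝ))) * h k' x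
      = ∑ j ∈ Finset.range (k'+1),
          (1 / Real.sqrt ((Nat.factorial k : ℝ) * (Nat.factorial (k + 1) : ℝ))) *
            ((-1 : ℝ) ^ (k - 1 - k') * ((Nat.factorial k : ℝ) / (Nat.factorial k' : ℝ)) *
              ((-1 : ℝ) ^ (k' - j) * (k'.choose j : ℝ) *
                ((Nat.factorial (k'+1) : ℝ) / (Nat.factorial (j+1) : ℝ)) * x ^ j)) := by
    intro k' _
    have hs : Real.sqrt ((Nat.factorial k' : ℝ) * (Nat.factorial (k' + 1) : ℝ)) ≠ 0 := by
      have : (0:ℝ) < (Nat.factorial k' : ℝ) * (Nat.factorial (k' + 1) : ℝ) := by positivity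
      exact ne_of_gt (Real.sqrt_pos.mpr this)
    rw [h, Finset.mul_sum, Finset.mul_sum]
    apply Finset.sum_congr rfl
    intro j _
    field_simp
  rw [Finset.sum_congr rfl hrhs]
  -- swap the double sum
  have hswap := (Finset.sum_Ico_Ico_comm 0 k (fun j k' =>
      (1 / Real.sqrt ((Nat.factorial k : ℝ) * (Nat.factorial (k + 1) : ℝ))) *
        ((-1 : ℝ) ^ (k - 1 - k') * ((Nat.factorial k : ℝ) / (Nat.factorial k' : ℝ)) *
          ((-1 : ℝ) ^ (k' - j) * (k'.choose j : ℝ) *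
            ((Nat.factorial (k'+1) : ℝ) / (Nat.factorial (j+1) : ℝ)) * x ^ j)))).symm
  simp only [Finset.range_eq_Ico] at *
  rw [hswap]
  -- per-j identity
  apply Finset.sum_congr rfl
  intro j hj
  have hj' : j < k := (Finset.mem_Ico.mp hj).2
  have hLHS : (1 / Real.sqrt ((Nat.factorial k : ℝ) * (Nat.factorial (k + 1) : ℝ))) *
      ((-1 : ℝ) ^ (k - (j+1)) * (Nat.choose k (j+1) : ℝ) *
        ((Nat.factorial (k + 1) : ℝ) / (Nat.factorial (j + 2) : ℝ)) * (((j:ℝ)+1) * x ^ j))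
      = (1 / Real.sqrt ((Nat.factorial k : ℝ) * (Nat.factorial (k + 1) : ℝ))) *
        ((-1 : ℝ) ^ (k - 1 - j) * (x ^ j *
          (((j:ℝ)+1) * (k.choose (j+1) : ℝ) * ((Nat.factorial (k+1) : ℝ) / (Nat.factorial (j+2) : ℝ))))) := by
    have e : k - (j+1) = k - 1 - j := by omega
    rw [e]; ring
  rw [hLHS]
  have hterm : ∀ k' ∈ Finset.Ico j k,
      (1 / Real.sqrt ((Nat.factorial k : ℝ) * (Nat.factorial (k + 1) : ℝ))) *
        ((-1 : ℝ) ^ (k - 1 - k') * ((Nat.factorial k : ℝ) / (Nat.factorial k' : ℝ)) *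
          ((-1 : ℝ) ^ (k' - j) * (k'.choose j : ℝ) *
            ((Nat.factorial (k'+1) : ℝ) / (Nat.factorial (j+1) : ℝ)) * x ^ j))
      = (1 / Real.sqrt ((Nat.factorial k : ℝ) * (Nat.factorial (k + 1) : ℝ))) *
        ((-1 : ℝ) ^ (k - 1 - j) * (x ^ j *
          (((Nat.factorial k : ℝ)/(Nat.factorial k' : ℝ)) * (k'.choose j : ℝ) *
            ((Nat.factorial (k'+1) : ℝ)/(Nat.factorial (j+1) : ℝ))))) := by
    intro k' hk'
    obtain ⟨h1, h2⟩ := Finset.mem_Ico.mp hk'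
    have hsign : (-1 : ℝ) ^ (k - 1 - k') * (-1 : ℝ) ^ (k' - j) = (-1 : ℝ) ^ (k - 1 - j) := by
      rw [← pow_add]; congr 1; omega
    linear_combination ((1 / Real.sqrt ((Nat.factorial k : ℝ) * (Nat.factorial (k + 1) : ℝ))) *
      (x ^ j * (((Nat.factorial k : ℝ)/(Nat.factorial k' : ℝ)) * (k'.choose j : ℝ) *
        ((Nat.factorial (k'+1) : ℝ)/(Nat.factorial (j+1) : ℝ))))) * hsign
  rw [Finset.sum_congr rfl hterm, ← Finset.mul_sum, ← Finset.mul_sum, ← Finset.mul_sum,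
    ← key k j hj']
end

section
/- Let h_j(x) = (1/√(j!·(j+1)!)) · Σ_{i=0}^j (-1)^(j-i) · binomial(j,i) · ((j+1)!/(i+1)!) · x^i. Then for all j ∈ ℕ, ∫₀^∞ h_j(x)² · e^(-x) dx ≤ j + 8. -/
open Finset Polynomial MeasureTheory

lemma aux_integrable_pow_exp (n : ℕ) :
    IntegrableOn (fun x : ℝ => x ^ n * Real.exp (-x)) (Set.Ioi 0) := by
  have h := Real.GammaIntegral_convergent (s := (n : ℝ) + 1) (by positivity)
  refine h.congr_fun (fun x hx => ?_) measurableSet_Ioi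
  simp only [add_sub_cancel_right, Real.rpow_natCast]
  ring

lemma aux_integral_pow_exp (n : ℕ) :
    ∫ x in Set.Ioi (0 : ℝ), x ^ n * Real.exp (-x) = (Nat.factorial n : ℝ) := by
  have h := Real.Gamma_eq_integral (s := (n : ℝ) + 1) (by positivity)
  rw [← Real.Gamma_nat_eq_factorial]; push_cast; rw [h]
  refine setIntegral_congr_fun measurableSet_Ioi (fun x hx => ?_)
  simp only [add_sub_cancel_right, Real.rpow_natCast]
  ring

lemma aux_key2 (k a : ℕ) (ha : 1 ≤ a) (hak : a ≤ k) :
    ∑ b ∈ range (k + 1), (-1 : ℤ) ^ b * (k.choose b : ℤ) * ((a + b).choose (b + 1) : ℤ) = 0 := by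
  have E : ∑ b ∈ range (k + 1), (-(1 + X : ℤ[X])) ^ b * 1 ^ (k - b) * (k.choose b : ℤ[X])
      = (-X) ^ k := by
    rw [← add_pow]; norm_num
  have key : ∑ b ∈ range (k + 1), Polynomial.C ((-1 : ℤ) ^ b * (k.choose b : ℤ)) * (1 + X) ^ (a + b)
      = (-X) ^ k * (1 + X) ^ a := by
    calc ∑ b ∈ range (k + 1), Polynomial.C ((-1 : ℤ) ^ b * (k.choose b : ℤ)) * (1 + X) ^ (a + b)
        = ∑ b ∈ range (k + 1),
            ((-(1 + X : ℤ[X])) ^ b * 1 ^ (k - b) * (k.choose b : ℤ[X])) * (1 + X) ^ a := by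
          refine Finset.sum_congr rfl (fun b _ => ?_)
          have hb : (-(1 + X) : ℤ[X]) ^ b = Polynomial.C ((-1 : ℤ) ^ b) * (1 + X) ^ b := by
            rw [neg_pow, map_pow, map_neg, map_one]
          rw [hb, one_pow, pow_add, map_mul, Polynomial.C_eq_natCast]
          ring
      _ = (-X) ^ k * (1 + X) ^ a := by rw [← Finset.sum_mul, E]
  have hc := congrArg (fun p : ℤ[X] => p.coeff (a - 1)) key
  simp only [Polynomial.finset_sum_coeff, Polynomial.coeff_C_mul,
    Polynomial.coeff_one_add_X_pow] at hc
  rw [show ((-X : ℤ[X]) ^ k * (1 + X) ^ a) =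
      ((-1) ^ k * (1 + X) ^ a) * X ^ k from by ring, Polynomial.coeff_mul_X_pow',
    if_neg (by omega)] at hc
  rw [← hc]
  refine Finset.sum_congr rfl (fun b _ => ?_)
  congr 2
  rw [← Nat.choose_symm (by omega : b + 1 ≤ a + b)]
  congr 1
  omega

lemma aux_alt_one (k : ℕ) :
    ∑ b ∈ range (k + 1), (-1 : ℝ) ^ b * ((k + 1).choose (b + 1) : ℝ) = 1 := by
  have h0 : ∑ i ∈ range (k + 2), (-1 : ℤ) ^ i * ((k + 1).choose i : ℤ) = 0 := by
    simpa using Int.alternating_sum_range_choose_of_ne (Nat.succ_ne_zero k)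
  rw [Finset.sum_range_succ'] at h0
  have h1 : ∑ i ∈ range (k + 1), (-1 : ℤ) ^ i * ((k + 1).choose (i + 1) : ℤ) = 1 := by
    have := h0
    simp only [pow_succ, pow_zero, Nat.choose_zero_right] at this
    push_cast at this ⊢
    have h2 : ∑ i ∈ range (k + 1), (-1 : ℤ) ^ i * (-1) * ((k + 1).choose (i + 1) : ℤ)
        = - ∑ i ∈ range (k + 1), (-1 : ℤ) ^ i * ((k + 1).choose (i + 1) : ℤ) := by
      rw [← Finset.sum_neg_distrib]
      exact Finset.sum_congr rfl (fun i _ => by ring)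
    linarith [this, h2.symm ▸ this]
  have := congrArg (fun z : ℤ => (z : ℝ)) h1
  push_cast at this
  simpa using this

lemma aux_key1 (k : ℕ) :
    ∑ b ∈ range (k + 1), (-1 : ℝ) ^ b * (k.choose b : ℝ) / (b + 1) = 1 / (k + 1) := by
  have step : ∀ b ∈ range (k + 1),
      (-1 : ℝ) ^ b * (k.choose b : ℝ) / (b + 1)
        = (-1) ^ b * ((k + 1).choose (b + 1) : ℝ) / (k + 1) := by
    intro b _
    have hn := Nat.add_one_mul_choose_eq k b
    have : ((k : ℝ) + 1) * (k.choose b : ℝ) = ((k + 1).choose (b + 1) : ℝ) * (b + 1) := by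
      exact_mod_cast congrArg (fun n : ℕ => (n : ℝ)) hn
    field_simp
    linear_combination this
  rw [Finset.sum_congr rfl step, ← Finset.sum_div]
  rw [show ∑ b ∈ range (k + 1), (-1 : ℝ) ^ b * ((k + 1).choose (b + 1) : ℝ)
      = 1 from aux_alt_one k]

lemma aux_sign (k b : ℕ) (hb : b ≤ k) : (-1 : ℝ) ^ (k - b) = (-1) ^ k * (-1) ^ b := by
  have h1 : (-1 : ℝ) ^ (k - b) * ((-1) ^ b * (-1) ^ b) = (-1) ^ k * (-1) ^ b := by
    rw [← pow_add, ← pow_add, ← pow_add]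
    congr 1
    omega
  have h2 : (-1 : ℝ) ^ b * (-1) ^ b = 1 := by
    rw [← pow_add, ← two_mul, pow_mul]
    norm_num
  rw [h2, mul_one] at h1
  exact h1

lemma aux_inner (k a : ℕ) (hak : a ≤ k) :
    ∑ b ∈ range (k + 1),
      ((-1 : ℝ) ^ (k - b) * (k.choose b : ℝ) *
          ((Nat.factorial (k + 1) : ℝ) / (Nat.factorial (b + 1) : ℝ))) *
        (Nat.factorial (a + b) : ℝ)
      = if a = 0 then (-1 : ℝ) ^ k * (Nat.factorial k : ℝ) else 0 := by
  rcases Nat.eq_zero_or_pos a with rfl | ha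
  · rw [if_pos rfl]
    have step : ∀ b ∈ range (k + 1),
        ((-1 : ℝ) ^ (k - b) * (k.choose b : ℝ) *
            ((Nat.factorial (k + 1) : ℝ) / (Nat.factorial (b + 1) : ℝ))) *
          (Nat.factorial (0 + b) : ℝ)
        = ((-1 : ℝ) ^ k * (Nat.factorial (k + 1) : ℝ)) *
            ((-1 : ℝ) ^ b * (k.choose b : ℝ) / ((b : ℝ) + 1)) := by
      intro b hb
      rw [aux_sign k b (Nat.lt_succ_iff.mp (Finset.mem_range.mp hb))]
      have hfb : (Nat.factorial (b + 1) : ℝ) = ((b : ℝ) + 1) * (Nat.factorial b : ℝ) := by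
        rw [Nat.factorial_succ]; push_cast; ring
      rw [Nat.zero_add, hfb]
      have hb0 : (Nat.factorial b : ℝ) ≠ 0 := by positivity
      have hb1 : ((b : ℝ) + 1) ≠ 0 := by positivity
      field_simp
    rw [Finset.sum_congr rfl step, ← Finset.mul_sum, aux_key1 k]
    have hk1 : (Nat.factorial (k + 1) : ℝ) = ((k : ℝ) + 1) * (Nat.factorial k : ℝ) := by
      rw [Nat.factorial_succ]; push_cast; ring
    rw [hk1]
    have : ((k : ℝ) + 1) ≠ 0 := by positivity
    field_simp
  · rw [if_neg (by omega)]
    have step : ∀ b ∈ range (k + 1),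
        ((-1 : ℝ) ^ (k - b) * (k.choose b : ℝ) *
            ((Nat.factorial (k + 1) : ℝ) / (Nat.factorial (b + 1) : ℝ))) *
          (Nat.factorial (a + b) : ℝ)
        = ((-1 : ℝ) ^ k * (Nat.factorial (k + 1) : ℝ) * (Nat.factorial (a - 1) : ℝ)) *
            ((-1 : ℝ) ^ b * (k.choose b : ℝ) * ((a + b).choose (b + 1) : ℝ)) := by
      intro b hb
      rw [aux_sign k b (Nat.lt_succ_iff.mp (Finset.mem_range.mp hb))]
      have hfab : (Nat.factorial (a + b) : ℝ)
          = ((a + b).choose (b + 1) : ℝ) * (Nat.factorial (b + 1) : ℝ) *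
              (Nat.factorial (a - 1) : ℝ) := by
        have := Nat.choose_mul_factorial_mul_factorial (by omega : b + 1 ≤ a + b)
        rw [show a + b - (b + 1) = a - 1 from by omega] at this
        exact_mod_cast this.symm
      have hb0 : (Nat.factorial (b + 1) : ℝ) ≠ 0 := by positivity
      rw [hfab]
      field_simp
    rw [Finset.sum_congr rfl step, ← Finset.mul_sum]
    have hz : ∑ b ∈ range (k + 1),
        (-1 : ℝ) ^ b * (k.choose b : ℝ) * ((a + b).choose (b + 1) : ℝ) = 0 := by
      have := aux_key2 k a ha hak
      exact_mod_cast congrArg (fun z : ℤ => (z : ℝ)) this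
    rw [hz, mul_zero]

noncomputable def cAux (k a : ℕ) : ℝ :=
  (-1 : ℝ) ^ (k - a) * (Nat.choose k a : ℝ) *
    ((Nat.factorial (k + 1) : ℝ) / (Nat.factorial (a + 1) : ℝ))

lemma h_eq (k : ℕ) (x : ℝ) :
    h k x = (1 / Real.sqrt ((Nat.factorial k : ℝ) * (Nat.factorial (k + 1) : ℝ))) *
      ∑ i ∈ range (k + 1), cAux k i * x ^ i := rfl

theorem h_sq_integral_no_x_bound (j : ℕ) :
    (∫ x in Set.Ioi (0 : ℝ), (h j x) ^ 2 * Real.exp (-x)) ≤ (j : ℝ) + 8 := by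
  set M : ℝ := (Nat.factorial j : ℝ) * (Nat.factorial (j + 1) : ℝ) with hMdef
  have hM : (0 : ℝ) < M := by positivity
  have hpt : ∀ x : ℝ, (h j x) ^ 2 * Real.exp (-x)
      = (1 / M) * ∑ a ∈ range (j + 1), ∑ b ∈ range (j + 1),
          (cAux j a * cAux j b) * (x ^ (a + b) * Real.exp (-x)) := by
    intro x
    calc (h j x) ^ 2 * Real.exp (-x)
        = (1 / M) * ((∑ a ∈ range (j + 1), cAux j a * x ^ a) *
            (∑ b ∈ range (j + 1), cAux j b * x ^ b) * Real.exp (-x)) := by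
          rw [h_eq, mul_pow]
          have h2 : ((1 : ℝ) / Real.sqrt M) ^ 2 = 1 / M := by
            rw [div_pow, one_pow, Real.sq_sqrt hM.le]
          rw [h2, sq]
          ring
      _ = (1 / M) * ∑ a ∈ range (j + 1), ∑ b ∈ range (j + 1),
            (cAux j a * cAux j b) * (x ^ (a + b) * Real.exp (-x)) := by
          rw [Finset.sum_mul_sum, Finset.sum_mul]
          congr 1
          refine Finset.sum_congr rfl fun a _ => ?_
          rw [Finset.sum_mul]
          refine Finset.sum_congr rfl fun b _ => ?_
          rw [pow_add]
          ring
  have hIab : ∀ a b : ℕ, IntegrableOn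
      (fun x : ℝ => (cAux j a * cAux j b) * (x ^ (a + b) * Real.exp (-x))) (Set.Ioi 0) :=
    fun a b => (aux_integrable_pow_exp (a + b)).const_mul _
  have hval : (∫ x in Set.Ioi (0 : ℝ), (h j x) ^ 2 * Real.exp (-x)) = 1 := by
    simp only [hpt]
    rw [MeasureTheory.integral_const_mul,
      MeasureTheory.integral_finset_sum _
        (fun a _ => integrable_finset_sum _ (fun b _ => hIab a b))]
    have hswap : ∀ a ∈ range (j + 1),
        (∫ x in Set.Ioi (0 : ℝ), ∑ b ∈ range (j + 1),
            (cAux j a * cAux j b) * (x ^ (a + b) * Real.exp (-x)))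
          = ∑ b ∈ range (j + 1), (cAux j a * cAux j b) * ((a + b).factorial : ℝ) := by
      intro a _
      rw [MeasureTheory.integral_finset_sum _ (fun b _ => hIab a b)]
      refine Finset.sum_congr rfl fun b _ => ?_
      rw [MeasureTheory.integral_const_mul, aux_integral_pow_exp]
    rw [Finset.sum_congr rfl hswap]
    have h1 : ∀ a ∈ range (j + 1),
        ∑ b ∈ range (j + 1), (cAux j a * cAux j b) * ((a + b).factorial : ℝ)
          = if a = 0 then cAux j a * ((-1 : ℝ) ^ j * (Nat.factorial j : ℝ)) else 0 := by
      intro a ha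
      have := aux_inner j a (Nat.lt_succ_iff.mp (Finset.mem_range.mp ha))
      rcases eq_or_ne a 0 with rfl | hne
      · rw [if_pos rfl] at this
        rw [if_pos rfl, ← this, Finset.mul_sum]
        exact Finset.sum_congr rfl fun b _ => by simp only [cAux]; ring
      · rw [if_neg hne]
        rw [if_neg hne] at this
        rw [show (0 : ℝ) = cAux j a * 0 from (mul_zero _).symm, ← this, Finset.mul_sum]
        exact Finset.sum_congr rfl fun b _ => by simp only [cAux]; ring
    rw [Finset.sum_congr rfl h1, Finset.sum_ite_eq' (range (j + 1)) 0,
      if_pos (Finset.mem_range.mpr (Nat.succ_pos j))]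
    have hc0 : cAux j 0 = (-1 : ℝ) ^ j * (Nat.factorial (j + 1) : ℝ) := by
      simp [cAux, Nat.factorial]
    have hsq : (-1 : ℝ) ^ j * (-1 : ℝ) ^ j = 1 := by
      rw [← pow_add, ← two_mul, pow_mul]; norm_num
    rw [hc0]
    rw [show (-1 : ℝ) ^ j * (Nat.factorial (j + 1) : ℝ) *
        ((-1 : ℝ) ^ j * (Nat.factorial j : ℝ))
        = ((-1 : ℝ) ^ j * (-1 : ℝ) ^ j) * ((Nat.factorial j : ℝ) *
            (Nat.factorial (j + 1) : ℝ)) from by ring, hsq, one_mul, ← hMdef]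
    field_simp
  rw [hval]
  have : (0 : ℝ) ≤ (j : ℝ) := Nat.cast_nonneg j
  linarith
end

section
/- For all natural numbers k with k ≥ 1 and all real x ≥ 1, |h_k(x)| ≤ (2x)^k, where h_k(x) = (1/√(k!·(k+1)!)) · Σ_{j=0}^k (-1)^(k-j) · binomial(k,j) · ((k+1)!/(j+1)!) · x^j. -/
theorem h_bound_large_x (k : ℕ) (hk : 1 ≤ k) (x : ℝ) (hx : 1 ≤ x) :
    |h k x| ≤ (2 * x) ^ k := by
  have hx0 : (0:ℝ) < x := lt_of_lt_of_le one_pos hx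
  rcases lt_or_ge k 3 with h3 | h3
  · interval_cases k
    · -- k = 1
      have hval : h 1 x = (1 / Real.sqrt 2) * (x - 2) := by
        simp [h, Finset.sum_range_succ]
        ring
      have hs : (1:ℝ) ≤ Real.sqrt 2 := by
        rw [show (1:ℝ) = Real.sqrt 1 by simp]
        exact Real.sqrt_le_sqrt (by norm_num)
      have hs0 : (0:ℝ) < Real.sqrt 2 := lt_of_lt_of_le one_pos hs
      rw [hval, abs_mul, abs_of_pos (by positivity : (0:ℝ) < 1 / Real.sqrt 2)]
      have h1 : |x - 2| ≤ 2 * x := by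
        rw [abs_le]; constructor <;> linarith
      calc 1 / Real.sqrt 2 * |x - 2| ≤ 1 * |x - 2| := by
            apply mul_le_mul_of_nonneg_right _ (abs_nonneg _)
            rw [div_le_one hs0]; exact hs
        _ ≤ 2 * x := by rw [one_mul]; exact h1
        _ = (2 * x) ^ 1 := (pow_one _).symm
    · -- k = 2
      have hval : h 2 x = (1 / Real.sqrt 12) * (x ^ 2 - 6 * x + 6) := by
        have h12 : ((Nat.factorial 2 : ℝ) * (Nat.factorial (2 + 1) : ℝ)) = 12 := by
          norm_num [Nat.factorial]
        rw [h, h12, Finset.sum_range_succ, Finset.sum_range_succ,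
          Finset.sum_range_succ, Finset.sum_range_zero]
        norm_num [Nat.factorial]
        ring
      have hs : (3:ℝ) ≤ Real.sqrt 12 := by
        rw [show (3:ℝ) = Real.sqrt 9 by
          rw [show (9:ℝ) = 3 ^ 2 by norm_num, Real.sqrt_sq (by norm_num)]]
        exact Real.sqrt_le_sqrt (by norm_num)
      have hs0 : (0:ℝ) < Real.sqrt 12 := lt_of_lt_of_le (by norm_num) hs
      rw [hval, abs_mul, abs_of_pos (by positivity : (0:ℝ) < 1 / Real.sqrt 12)]
      have h1 : |x ^ 2 - 6 * x + 6| ≤ 12 * x ^ 2 := by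
        rw [abs_le]; constructor <;> nlinarith
      calc 1 / Real.sqrt 12 * |x ^ 2 - 6 * x + 6|
          ≤ (1/3) * |x ^ 2 - 6 * x + 6| := by
            apply mul_le_mul_of_nonneg_right _ (abs_nonneg _)
            rw [div_le_div_iff₀ hs0 (by norm_num)]
            linarith
        _ ≤ (1/3) * (12 * x ^ 2) := by
            apply mul_le_mul_of_nonneg_left h1 (by norm_num)
        _ = (2 * x) ^ 2 := by ring
  · -- k ≥ 3
    set N := Real.sqrt ((Nat.factorial k : ℝ) * (Nat.factorial (k + 1) : ℝ)) with hN
    have hfpos : (0:ℝ) < (Nat.factorial k : ℝ) * (Nat.factorial (k + 1) : ℝ) := by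
      positivity
    have hNpos : 0 < N := Real.sqrt_pos.mpr hfpos
    -- termwise bound
    have hterm : ∀ j ∈ Finset.range (k + 1),
        |(-1 : ℝ) ^ (k - j) * (Nat.choose k j : ℝ) *
          ((Nat.factorial (k + 1) : ℝ) / (Nat.factorial (j + 1) : ℝ)) * x ^ j|
        ≤ (Nat.factorial k : ℝ) * (Nat.choose (k + 1) (j + 1) : ℝ) * x ^ k := by
      intro j hj
      have hjk : j ≤ k := Nat.lt_succ_iff.mp (Finset.mem_range.mp hj)
      have hnat : Nat.choose k j * Nat.factorial (k + 1) ≤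
          Nat.factorial k * Nat.choose (k + 1) (j + 1) * Nat.factorial (j + 1) := by
        have e1 := Nat.choose_mul_factorial_mul_factorial hjk
        have e2 := Nat.choose_mul_factorial_mul_factorial
          (Nat.succ_le_succ hjk : j + 1 ≤ k + 1)
        have hsub : (k + 1) - (j + 1) = k - j := by omega
        rw [hsub] at e2
        have heq : Nat.choose k j * Nat.factorial (k + 1) * Nat.factorial j *
            Nat.factorial (k - j) =
            Nat.factorial k * Nat.choose (k + 1) (j + 1) * Nat.factorial (j + 1) *
            Nat.factorial (k - j) := by
          calc Nat.choose k j * Nat.factorial (k + 1) * Nat.factorial j *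
              Nat.factorial (k - j)
              = (Nat.choose k j * Nat.factorial j * Nat.factorial (k - j)) *
                Nat.factorial (k + 1) := by ring
            _ = Nat.factorial k * Nat.factorial (k + 1) := by rw [e1]
            _ = Nat.factorial k * (Nat.choose (k + 1) (j + 1) *
                Nat.factorial (j + 1) * Nat.factorial (k - j)) := by rw [e2]
            _ = Nat.factorial k * Nat.choose (k + 1) (j + 1) *
                Nat.factorial (j + 1) * Nat.factorial (k - j) := by ring
        have heq' : Nat.choose k j * Nat.factorial (k + 1) * Nat.factorial j =
            Nat.factorial k * Nat.choose (k + 1) (j + 1) * Nat.factorial (j + 1) :=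
          Nat.eq_of_mul_eq_mul_right (Nat.factorial_pos _) heq
        calc Nat.choose k j * Nat.factorial (k + 1)
            ≤ Nat.choose k j * Nat.factorial (k + 1) * Nat.factorial j :=
              Nat.le_mul_of_pos_right _ (Nat.factorial_pos _)
          _ = _ := heq'
      have hfrac : (Nat.choose k j : ℝ) *
          ((Nat.factorial (k + 1) : ℝ) / (Nat.factorial (j + 1) : ℝ)) ≤
          (Nat.factorial k : ℝ) * (Nat.choose (k + 1) (j + 1) : ℝ) := by
        rw [mul_div_assoc', div_le_iff₀ (by positivity : (0:ℝ) < (Nat.factorial (j+1) : ℝ))]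
        exact_mod_cast hnat
      have hxjk : x ^ j ≤ x ^ k := pow_le_pow_right₀ hx hjk
      rw [abs_mul, abs_mul, abs_mul, abs_pow, abs_neg, abs_one, one_pow, one_mul,
        Nat.abs_cast, abs_of_pos (by positivity : (0:ℝ) <
          (Nat.factorial (k + 1) : ℝ) / (Nat.factorial (j + 1) : ℝ)),
        abs_of_pos (pow_pos hx0 j)]
      have h1 : (Nat.choose k j : ℝ) *
          ((Nat.factorial (k + 1) : ℝ) / (Nat.factorial (j + 1) : ℝ)) * x ^ j ≤
          (Nat.factorial k : ℝ) * (Nat.choose (k + 1) (j + 1) : ℝ) * x ^ j :=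
        mul_le_mul_of_nonneg_right hfrac (le_of_lt (pow_pos hx0 j))
      refine le_trans h1 (mul_le_mul_of_nonneg_left hxjk (by positivity))
    -- sum bound
    have hsumnat : ∑ j ∈ Finset.range (k + 1), Nat.choose (k + 1) (j + 1) ≤ 2 ^ (k + 1) := by
      have := Nat.sum_range_choose (k + 1)
      rw [Finset.sum_range_succ' (fun i => Nat.choose (k + 1) i) (k + 1)] at this
      simp at this
      omega
    have hsum : |∑ j ∈ Finset.range (k + 1),
        (-1 : ℝ) ^ (k - j) * (Nat.choose k j : ℝ) *
          ((Nat.factorial (k + 1) : ℝ) / (Nat.factorial (j + 1) : ℝ)) * x ^ j|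
        ≤ (Nat.factorial k : ℝ) * 2 ^ (k + 1) * x ^ k := by
      calc |∑ j ∈ Finset.range (k + 1), _| ≤ _ := Finset.abs_sum_le_sum_abs _ _
        _ ≤ ∑ j ∈ Finset.range (k + 1),
            (Nat.factorial k : ℝ) * (Nat.choose (k + 1) (j + 1) : ℝ) * x ^ k :=
          Finset.sum_le_sum hterm
        _ = ((Nat.factorial k : ℝ) * x ^ k) *
            ((∑ j ∈ Finset.range (k + 1), Nat.choose (k + 1) (j + 1) : ℕ) : ℝ) := by
          push_cast
          rw [Finset.mul_sum]
          apply Finset.sum_congr rfl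
          intros; ring
        _ ≤ ((Nat.factorial k : ℝ) * x ^ k) * ((2 ^ (k + 1) : ℕ) : ℝ) := by
          apply mul_le_mul_of_nonneg_left _ (by positivity)
          exact_mod_cast hsumnat
        _ = (Nat.factorial k : ℝ) * 2 ^ (k + 1) * x ^ k := by push_cast; ring
    -- 2 * k! ≤ N
    have h2N : 2 * (Nat.factorial k : ℝ) ≤ N := by
      rw [hN, Real.le_sqrt (by positivity) (le_of_lt hfpos)]
      have : 4 * Nat.factorial k ≤ Nat.factorial (k + 1) := by
        rw [Nat.factorial_succ]
        exact Nat.mul_le_mul_right _ (by omega)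
      have : (4 : ℝ) * (Nat.factorial k : ℝ) ≤ (Nat.factorial (k + 1) : ℝ) := by
        exact_mod_cast this
      nlinarith [(Nat.cast_pos (α := ℝ)).mpr (Nat.factorial_pos k)]
    -- finish
    rw [h, abs_mul, abs_of_pos (by positivity : (0:ℝ) < 1 / N)]
    calc (1 / N) * |∑ j ∈ Finset.range (k + 1), _|
        ≤ (1 / N) * ((Nat.factorial k : ℝ) * 2 ^ (k + 1) * x ^ k) :=
          mul_le_mul_of_nonneg_left hsum (by positivity)
      _ ≤ 2 ^ k * x ^ k := by
          rw [div_mul_eq_mul_div, one_mul, div_le_iff₀ hNpos]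
          have : (Nat.factorial k : ℝ) * 2 ^ (k + 1) = 2 ^ k * (2 * Nat.factorial k) := by
            ring
          rw [this]
          have hxk : (0:ℝ) < x ^ k := pow_pos hx0 k
          calc 2 ^ k * (2 * (Nat.factorial k : ℝ)) * x ^ k
              ≤ 2 ^ k * N * x ^ k := by
                apply mul_le_mul_of_nonneg_right _ (le_of_lt hxk)
                exact mul_le_mul_of_nonneg_left h2N (by positivity)
            _ = 2 ^ k * x ^ k * N := by ring
      _ = (2 * x) ^ k := (mul_pow _ _ _).symm
end

section
/- For all d ∈ ℕ, if g is a real polynomial of degree at most d, then for all real y ≥ 1, g(y)² ≤ 2·(2y)^(2d)·∫₀^∞ g(x)²·x·e^(-x) dx. -/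
open MeasureTheory Set Finset Nat

lemma momInt (k : ℕ) : IntegrableOn (fun x : ℝ => x ^ k * Real.exp (-x)) (Set.Ioi 0) := by
  have h := Real.GammaIntegral_convergent (s := k + 1) (by positivity)
  refine h.congr_fun ?_ measurableSet_Ioi
  intro x hx
  simp only [add_sub_cancel_right]
  rw [Real.rpow_natCast, mul_comm]

lemma momVal (k : ℕ) : ∫ x in Set.Ioi (0:ℝ), x ^ k * Real.exp (-x) = (k ! : ℝ) := by
  have h := Real.Gamma_eq_integral (s := k + 1) (by positivity)
  rw [Real.Gamma_nat_eq_factorial] at h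
  rw [h]
  refine setIntegral_congr_fun measurableSet_Ioi fun x hx => ?_
  simp only [add_sub_cancel_right]
  rw [Real.rpow_natCast, mul_comm]

lemma momInt' (k : ℕ) : IntegrableOn (fun x : ℝ => x ^ k * (x * Real.exp (-x))) (Set.Ioi 0) := by
  have h := momInt (k + 1)
  refine h.congr_fun ?_ measurableSet_Ioi
  intro x hx
  ring

lemma momVal' (k : ℕ) : ∫ x in Set.Ioi (0:ℝ), x ^ k * (x * Real.exp (-x)) = ((k+1) ! : ℝ) := by
  rw [← momVal (k+1)]
  refine setIntegral_congr_fun measurableSet_Ioi fun x hx => ?_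
  ring

open Finset Nat

lemma key_s17 : ∀ (m s r : ℕ), m ≤ s →
    (∑ i ∈ Finset.range (m+1), (-1:ℤ)^i * (m.choose i) * ((s-i).choose r)) =
      if r < m then 0 else (((s-m).choose (r-m) : ℤ)) := by
  intro m
  induction m with
  | zero => intro s r _; simp
  | succ m ih =>
    intro s r hs
    have hms : m ≤ s - 1 := by omega
    have hms' : m ≤ s := by omega
    set u : ℕ → ℤ := fun j => (-1:ℤ)^j * (m.choose j) * ((s-j).choose r) with hu
    have h1 : ∀ i ∈ Finset.range (m+1),
        (-1:ℤ)^(i+1) * (((m+1).choose (i+1) : ℕ) : ℤ) * (((s-(i+1)).choose r : ℕ) : ℤ) =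
        -((-1:ℤ)^i * (m.choose i) * (((s-1)-i).choose r)) + u (i+1) := by
      intro i hi
      have hsi : s - (i+1) = (s-1) - i := by omega
      rw [hu]
      simp only []
      rw [Nat.choose_succ_succ]
      push_cast
      rw [hsi]
      ring
    rw [Finset.sum_range_succ']
    rw [Finset.sum_congr rfl h1, Finset.sum_add_distrib]
    have e1 : ∑ i ∈ Finset.range (m+1), -((-1:ℤ)^i * (m.choose i) * (((s-1)-i).choose r))
        = -(if r < m then 0 else (((s-1-m).choose (r-m) : ℤ))) := by
      rw [← ih (s-1) r hms]
      simp
    have e2 : ∑ i ∈ Finset.range (m+1), u (i+1)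
        = (if r < m then 0 else (((s-m).choose (r-m) : ℤ))) - u 0 := by
      have e3 : ∑ i ∈ Finset.range (m+2), u i = ∑ i ∈ Finset.range (m+1), u i + u (m+1) :=
        Finset.sum_range_succ u (m+1)
      have e4 : u (m+1) = 0 := by
        rw [hu]; simp [Nat.choose_succ_self]
      have e5 : ∑ i ∈ Finset.range (m+2), u i = ∑ i ∈ Finset.range (m+1), u (i+1) + u 0 :=
        Finset.sum_range_succ' u (m+1)
      have e6 : ∑ i ∈ Finset.range (m+1), u i = if r < m then 0 else (((s-m).choose (r-m) : ℤ)) :=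
        ih s r hms'
      rw [e4, add_zero] at e3
      rw [e6] at e3
      omega
    rw [e1, e2]
    have hu0 : u 0 = ((s.choose r : ℕ) : ℤ) := by rw [hu]; simp
    rw [hu0]
    simp only [pow_zero, Nat.choose_zero_right, Nat.cast_one, one_mul, Nat.sub_zero]
    rcases lt_trichotomy r m with hr | hr | hr
    · simp [hr, show r < m + 1 by omega]
    · subst hr
      simp [show r < r + 1 by omega, Nat.sub_self]
      ring
    · have h2 : ¬ (r < m) := by omega
      have h3 : ¬ (r < m + 1) := by omega
      simp only [h2, h3, if_false]
      have hp : (s - m).choose (r - m) = (s-m-1).choose (r-m-1) + (s-m-1).choose (r-m) := by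
        have a1 : s - m = (s - m - 1) + 1 := by omega
        have a2 : r - m = (r - m - 1) + 1 := by omega
        rw [a1, a2, Nat.choose_succ_succ]
        simp [Nat.succ_eq_add_one, ← a2]
      have a3 : s - 1 - m = s - m - 1 := by omega
      have a4 : s - (m+1) = s - m - 1 := by omega
      have a5 : r - (m+1) = r - m - 1 := by omega
      rw [a3, a4, a5, hp]
      push_cast
      ring

lemma Alem (n k : ℕ) (hk : k ≤ n) :
    ∑ j ∈ Finset.range (n+1), (-1:ℤ)^j * ((n+1).choose (j+1)) * ((j+k+1).choose (k+1))
      = if k = n then (-1:ℤ)^n else 0 := by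
  have hkey := key_s17 (n+1) (n+k+1) (k+1) (by omega)
  rw [Finset.sum_range_succ] at hkey
  have hlast : (-1:ℤ)^(n+1) * (((n+1).choose (n+1) : ℕ) : ℤ) * (((n+k+1-(n+1)).choose (k+1) : ℕ) : ℤ) = 0 := by
    have h0 : n+k+1-(n+1) = k := by omega
    rw [h0, Nat.choose_eq_zero_of_lt (by omega : k < k+1)]
    simp
  rw [hlast, add_zero, ← Finset.sum_range_reflect] at hkey
  simp only [Nat.add_sub_cancel] at hkey
  have h7 : (-1:ℤ)^n * (-1:ℤ)^n = 1 := by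
    rw [← pow_add]; exact Even.neg_one_pow ⟨n, rfl⟩
  have hterm : ∀ j ∈ Finset.range (n+1),
      (-1:ℤ)^(n-j) * (((n+1).choose (n-j) : ℕ) : ℤ) * (((n+k+1-(n-j)).choose (k+1) : ℕ) : ℤ)
      = (-1:ℤ)^n * ((-1:ℤ)^j * (((n+1).choose (j+1) : ℕ) : ℤ) * (((j+k+1).choose (k+1) : ℕ) : ℤ)) := by
    intro j hj
    simp only [Finset.mem_range] at hj
    have hj' : j ≤ n := by omega
    have c1 : n+k+1-(n-j) = j+k+1 := by omega
    have c2 : (n+1).choose (n-j) = (n+1).choose (j+1) := by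
      have h := Nat.choose_symm (show j+1 ≤ n+1 by omega)
      simpa [show n+1-(j+1) = n-j by omega] using h
    have h4 : (-1:ℤ)^(n-j) = (-1)^n * (-1)^j := by
      have h5 : (-1:ℤ)^(n-j) * (-1:ℤ)^j = (-1)^n := by
        rw [← pow_add, Nat.sub_add_cancel hj']
      have h6 : (-1:ℤ)^j * (-1:ℤ)^j = 1 := by
        rw [← pow_add]; exact Even.neg_one_pow ⟨j, rfl⟩
      calc (-1:ℤ)^(n-j) = (-1)^(n-j) * ((-1)^j * (-1)^j) := by rw [h6, mul_one]
        _ = (-1)^n * (-1)^j := by rw [← mul_assoc, h5]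
    rw [c1, c2, h4]
    ring
  rw [Finset.sum_congr rfl hterm, ← Finset.mul_sum] at hkey
  rcases eq_or_lt_of_le hk with he | hlt
  · subst he
    simp only [show ¬ (k+1 < k+1) by omega, if_false, Nat.sub_self, Nat.choose_zero_right,
      Nat.cast_one] at hkey
    rw [if_pos rfl]
    calc ∑ j ∈ Finset.range (k+1), (-1:ℤ)^j * ((k+1).choose (j+1)) * ((j+k+1).choose (k+1))
        = ((-1:ℤ)^k * (-1)^k) * ∑ j ∈ Finset.range (k+1), (-1:ℤ)^j * ((k+1).choose (j+1)) * ((j+k+1).choose (k+1)) := by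
          rw [h7, one_mul]
      _ = (-1:ℤ)^k * ((-1:ℤ)^k * ∑ j ∈ Finset.range (k+1), (-1:ℤ)^j * ((k+1).choose (j+1)) * ((j+k+1).choose (k+1))) := by
          ring
      _ = (-1:ℤ)^k := by rw [hkey, mul_one]
  · have hlt1 : (k+1) < n+1 := by omega
    simp only [if_pos hlt1] at hkey
    rw [if_neg (by omega : ¬ (k = n))]
    calc ∑ j ∈ Finset.range (n+1), (-1:ℤ)^j * ((n+1).choose (j+1)) * ((j+k+1).choose (k+1))
        = ((-1:ℤ)^n * (-1)^n) * ∑ j ∈ Finset.range (n+1), (-1:ℤ)^j * ((n+1).choose (j+1)) * ((j+k+1).choose (k+1)) := by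
          rw [h7, one_mul]
      _ = (-1:ℤ)^n * ((-1:ℤ)^n * ∑ j ∈ Finset.range (n+1), (-1:ℤ)^j * ((n+1).choose (j+1)) * ((j+k+1).choose (k+1))) := by
          ring
      _ = 0 := by rw [hkey, mul_zero]

lemma Jlem (n k : ℕ) (hk : k ≤ n) :
    ∑ j ∈ Finset.range (n+1), ((-1:ℝ)^j * ((n+1).choose (j+1)) / (j ! : ℝ)) * (((j+k+1)! : ℕ) : ℝ)
      = if k = n then (-1:ℝ)^n * (((n+1)! : ℕ) : ℝ) else 0 := by
  have hA := Alem n k hk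
  have hAR : ∑ j ∈ Finset.range (n+1), (-1:ℝ)^j * (((n+1).choose (j+1) : ℕ) : ℝ) * (((j+k+1).choose (k+1) : ℕ) : ℝ)
      = if k = n then (-1:ℝ)^n else 0 := by
    have h2 := congrArg (fun z : ℤ => (z : ℝ)) hA
    push_cast at h2
    rw [h2]
  have hterm : ∀ j ∈ Finset.range (n+1),
      ((-1:ℝ)^j * ((n+1).choose (j+1)) / (j ! : ℝ)) * (((j+k+1)! : ℕ) : ℝ)
      = ((-1:ℝ)^j * (((n+1).choose (j+1) : ℕ) : ℝ) * (((j+k+1).choose (k+1) : ℕ) : ℝ)) * (((k+1)! : ℕ) : ℝ) := by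
    intro j _
    have hf : ((j+k+1)! : ℕ) = (j+k+1).choose (k+1) * (k+1)! * j ! := by
      have h := Nat.choose_mul_factorial_mul_factorial (show k+1 ≤ j+k+1 by omega)
      rw [show j+k+1-(k+1) = j by omega] at h
      omega
    rw [hf]
    have hj : (j ! : ℝ) ≠ 0 := by positivity
    push_cast
    field_simp
  rw [Finset.sum_congr rfl hterm, ← Finset.sum_mul, hAR]
  split_ifs with h
  · subst h
    ring
  · rw [zero_mul]

noncomputable def Lco (n k : ℕ) : ℝ := (-1:ℝ)^k * ((n+1).choose (k+1)) / (k ! : ℝ)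

noncomputable def Lag (n : ℕ) : Polynomial ℝ :=
  ∑ k ∈ Finset.range (n+1), Polynomial.C (Lco n k) * Polynomial.X ^ k

noncomputable def Phi (p : Polynomial ℝ) : ℝ :=
  ∫ x in Set.Ioi (0:ℝ), p.eval x * (x * Real.exp (-x))

lemma polyInt (p : Polynomial ℝ) :
    MeasureTheory.IntegrableOn (fun x => p.eval x * (x * Real.exp (-x))) (Set.Ioi 0) := by
  have hfun : (fun x : ℝ => p.eval x * (x * Real.exp (-x)))
      = fun x => ∑ i ∈ Finset.range (p.natDegree+1), p.coeff i * (x^i * (x * Real.exp (-x))) := by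
    funext x
    rw [Polynomial.eval_eq_sum_range, Finset.sum_mul]
    exact Finset.sum_congr rfl fun i _ => by ring
  rw [hfun]
  exact MeasureTheory.integrable_finset_sum _ fun i _ => (momInt' i).const_mul _

lemma Phi_eq (p : Polynomial ℝ) (N : ℕ) (hN : p.natDegree < N) :
    Phi p = ∑ i ∈ Finset.range N, p.coeff i * (((i+1)! : ℕ) : ℝ) := by
  unfold Phi
  have hfun : (fun x : ℝ => p.eval x * (x * Real.exp (-x)))
      = fun x => ∑ i ∈ Finset.range N, p.coeff i * (x^i * (x * Real.exp (-x))) := by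
    funext x
    rw [Polynomial.eval_eq_sum_range' hN, Finset.sum_mul]
    exact Finset.sum_congr rfl fun i _ => by ring
  rw [hfun, MeasureTheory.integral_finset_sum _ fun i _ => (momInt' i).const_mul _]
  exact Finset.sum_congr rfl fun i _ => by
    rw [MeasureTheory.integral_const_mul, momVal' i]

lemma Phi_monX (b : ℝ) (i : ℕ) :
    Phi (Polynomial.C b * Polynomial.X ^ i) = b * (((i+1)! : ℕ) : ℝ) := by
  rw [Phi_eq _ (i+1) (by
    exact lt_of_le_of_lt (Polynomial.natDegree_C_mul_X_pow_le b i) (by omega))]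
  rw [Finset.sum_eq_single i]
  · simp [Polynomial.coeff_C_mul, Polynomial.coeff_X_pow]
  · intro j _ hj
    simp [Polynomial.coeff_C_mul, Polynomial.coeff_X_pow, Ne.symm hj, hj]
  · intro h
    exact absurd (Finset.self_mem_range_succ i) h

lemma Phi_sum {ι : Type*} (s : Finset ι) (f : ι → Polynomial ℝ) :
    Phi (∑ i ∈ s, f i) = ∑ i ∈ s, Phi (f i) := by
  classical
  induction s using Finset.cons_induction with
  | empty => simp [Phi]
  | cons a s' ha ih =>
    rw [Finset.sum_cons, Finset.sum_cons, ← ih]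
    unfold Phi
    rw [← MeasureTheory.integral_add (polyInt _) (polyInt _)]
    congr 1
    funext x
    simp [Polynomial.eval_add]
    ring

lemma Phi_Cmul (b : ℝ) (p : Polynomial ℝ) : Phi (Polynomial.C b * p) = b * Phi p := by
  rw [Phi_eq (Polynomial.C b * p) (p.natDegree+1)
      (lt_of_le_of_lt (Polynomial.natDegree_C_mul_le _ _) (by omega)),
    Phi_eq p (p.natDegree+1) (by omega), Finset.mul_sum]
  exact Finset.sum_congr rfl fun i _ => by rw [Polynomial.coeff_C_mul]; ring

lemma Phi_X_Lp (k n : ℕ) (hk : k ≤ n) :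
    Phi (Polynomial.X^k * Lag n) = if k = n then (-1:ℝ)^n * (((n+1)! : ℕ) : ℝ) else 0 := by
  have hexp : Polynomial.X^k * Lag n
      = ∑ j ∈ Finset.range (n+1), Polynomial.C (Lco n j) * Polynomial.X^(k+j) := by
    rw [Lag, Finset.mul_sum]
    exact Finset.sum_congr rfl fun j _ => by rw [pow_add]; ring
  rw [hexp, Phi_sum, ← Jlem n k hk]
  refine Finset.sum_congr rfl fun j _ => ?_
  rw [Phi_monX, show k+j+1 = j+k+1 by omega]
  simp [Lco]

lemma neg_one_sq_pow (n : ℕ) : (-1:ℝ)^n * (-1:ℝ)^n = 1 := by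
  rw [← pow_add]; exact Even.neg_one_pow ⟨n, rfl⟩

lemma Phi_Lp_Lp (m n : ℕ) (h : m ≤ n) :
    Phi (Lag m * Lag n) = if m = n then ((n:ℝ)+1) else 0 := by
  have hexp : Lag m * Lag n
      = ∑ k ∈ Finset.range (m+1), Polynomial.C (Lco m k) * (Polynomial.X^k * Lag n) := by
    rw [Lag, Finset.sum_mul]
    exact Finset.sum_congr rfl fun k _ => by ring
  rw [hexp, Phi_sum]
  have hterm : ∀ k ∈ Finset.range (m+1),
      Phi (Polynomial.C (Lco m k) * (Polynomial.X^k * Lag n))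
      = Lco m k * (if k = n then (-1:ℝ)^n * (((n+1)! : ℕ) : ℝ) else 0) := by
    intro k hk
    simp only [Finset.mem_range] at hk
    rw [Phi_Cmul, Phi_X_Lp k n (by omega)]
  rw [Finset.sum_congr rfl hterm]
  rcases eq_or_lt_of_le h with he | hlt
  · subst he
    rw [if_pos rfl, Finset.sum_eq_single m]
    · rw [if_pos rfl]
      have hLco : Lco m m = (-1:ℝ)^m / (m ! : ℝ) := by simp [Lco]
      rw [hLco, Nat.factorial_succ]
      have hm : (m ! : ℝ) ≠ 0 := by positivity
      push_cast
      field_simp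
      linear_combination neg_one_sq_pow m
    · intro k _ hk
      rw [if_neg hk, mul_zero]
    · intro hm
      exact absurd (Finset.self_mem_range_succ m) hm
  · rw [if_neg (by omega)]
    refine Finset.sum_eq_zero fun k hk => ?_
    simp only [Finset.mem_range] at hk
    rw [if_neg (by omega), mul_zero]

lemma Phi_Lp_Lp' (m n : ℕ) :
    Phi (Lag m * Lag n) = if m = n then ((n:ℝ)+1) else 0 := by
  rcases le_total m n with h | h
  · exact Phi_Lp_Lp m n h
  · rw [mul_comm, Phi_Lp_Lp n m h]
    by_cases he : m = n
    · subst he; simp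
    · rw [if_neg (fun hnm => he hnm.symm), if_neg he]

lemma Lp_natDegree_le (n : ℕ) : (Lag n).natDegree ≤ n := by
  refine le_trans (Polynomial.natDegree_sum_le _ _) ?_
  rw [Finset.fold_max_le]
  refine ⟨by omega, fun k hk => ?_⟩
  simp only [Finset.mem_range] at hk
  exact le_trans (Polynomial.natDegree_C_mul_X_pow_le _ _) (by omega)

lemma Lp_coeff_self (n : ℕ) : (Lag n).coeff n = (-1:ℝ)^n / (n ! : ℝ) := by
  rw [Lag, Polynomial.finset_sum_coeff, Finset.sum_eq_single n]
  · simp [Lco, Polynomial.coeff_C_mul, Polynomial.coeff_X_pow]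
  · intro k _ hk
    simp [Polynomial.coeff_C_mul, Polynomial.coeff_X_pow, Ne.symm hk, hk]
  · intro hm
    exact absurd (Finset.self_mem_range_succ n) hm

lemma expand : ∀ (d : ℕ) (g : Polynomial ℝ), g.natDegree ≤ d →
    ∃ c : ℕ → ℝ, g = ∑ n ∈ Finset.range (d+1), Polynomial.C (c n) * Lag n := by
  intro d
  induction d with
  | zero =>
    intro g hg
    refine ⟨fun _ => g.coeff 0, ?_⟩
    have h1 : g = Polynomial.C (g.coeff 0) := Polynomial.eq_C_of_natDegree_le_zero hg
    have hL0 : Lag 0 = 1 := by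
      simp [Lag, Lco]
    rw [Finset.sum_range_one, hL0, mul_one, ← h1]
  | succ d ih =>
    intro g hg
    set a : ℝ := g.coeff (d+1) * ((-1:ℝ)^(d+1) * (((d+1)! : ℕ) : ℝ)) with ha
    set g' := g - Polynomial.C a * Lag (d+1) with hgdef
    have hco : g'.coeff (d+1) = 0 := by
      rw [hgdef, Polynomial.coeff_sub, Polynomial.coeff_C_mul, Lp_coeff_self, ha]
      have h2 : ((d+1)! : ℝ) ≠ 0 := by positivity
      field_simp
      linear_combination (-(g.coeff (d+1))) * neg_one_sq_pow (d+1)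
    have hdeg1 : g'.natDegree ≤ d+1 := by
      refine le_trans (Polynomial.natDegree_sub_le _ _) (max_le hg ?_)
      exact le_trans (Polynomial.natDegree_C_mul_le _ _) (Lp_natDegree_le (d+1))
    have hdeg : g'.natDegree ≤ d := by
      refine Polynomial.natDegree_le_iff_coeff_eq_zero.mpr fun i hi => ?_
      rcases eq_or_lt_of_le (show d+1 ≤ i by omega) with h | h
      · rw [← h]; exact hco
      · exact Polynomial.coeff_eq_zero_of_natDegree_lt (lt_of_le_of_lt hdeg1 h)
    obtain ⟨c, hc⟩ := ih g' hdeg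
    refine ⟨fun n => if n = d+1 then a else c n, ?_⟩
    rw [Finset.sum_range_succ]
    have h3 : ∑ n ∈ Finset.range (d+1), Polynomial.C (if n = d+1 then a else c n) * Lag n
        = ∑ n ∈ Finset.range (d+1), Polynomial.C (c n) * Lag n := by
      refine Finset.sum_congr rfl fun n hn => ?_
      simp only [Finset.mem_range] at hn
      rw [if_neg (by omega)]
    simp only [if_true, ite_true]
    rw [h3, ← hc, hgdef]
    ring

noncomputable def Sb (n : ℕ) : ℝ :=
  ∑ k ∈ Finset.range (n+1), (((n+1).choose (k+1) : ℕ) : ℝ) / (k ! : ℝ)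

lemma Lag_eval (n : ℕ) (x : ℝ) :
    (Lag n).eval x = ∑ k ∈ Finset.range (n+1), Lco n k * x^k := by
  simp [Lag, Polynomial.eval_finset_sum]

lemma Lag_eval_bound (n : ℕ) (y : ℝ) (hy : 1 ≤ y) :
    |(Lag n).eval y| ≤ Sb n * y^n := by
  have hy0 : (0:ℝ) ≤ y := by linarith
  rw [Lag_eval]
  refine le_trans (Finset.abs_sum_le_sum_abs _ _) ?_
  rw [Sb, Finset.sum_mul]
  refine Finset.sum_le_sum fun k hk => ?_
  simp only [Finset.mem_range] at hk
  rw [abs_mul, abs_pow, abs_of_nonneg hy0]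
  have h1 : |Lco n k| = (((n+1).choose (k+1) : ℕ) : ℝ) / (k ! : ℝ) := by
    rw [Lco, abs_div, abs_mul, abs_pow, abs_neg, abs_one, one_pow, one_mul,
      Nat.abs_cast, Nat.abs_cast]
  rw [h1]
  have h2 : y^k ≤ y^n := pow_le_pow_right₀ hy (by omega)
  have h3 : (0:ℝ) ≤ (((n+1).choose (k+1) : ℕ) : ℝ) / (k ! : ℝ) := by positivity
  exact mul_le_mul_of_nonneg_left h2 h3

lemma Sb_nonneg (n : ℕ) : 0 ≤ Sb n := by
  rw [Sb]; positivity

lemma Sb_le (n : ℕ) : Sb n ≤ 2^(n+1) := by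
  have h1 : Sb n ≤ ∑ k ∈ Finset.range (n+1), (((n+1).choose (k+1) : ℕ) : ℝ) := by
    refine Finset.sum_le_sum fun k _ => ?_
    have hk1 : (1:ℝ) ≤ (k ! : ℝ) := by
      exact_mod_cast Nat.one_le_iff_ne_zero.mpr (Nat.factorial_ne_zero k)
    calc (((n+1).choose (k+1) : ℕ) : ℝ) / (k ! : ℝ) ≤ (((n+1).choose (k+1) : ℕ) : ℝ) / 1 :=
          div_le_div_of_nonneg_left (by positivity) (by norm_num) hk1
      _ = _ := div_one _
  have h2 : ∑ k ∈ Finset.range (n+1), ((n+1).choose (k+1)) ≤ 2^(n+1) := by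
    have h3 := Nat.sum_range_choose (n+1)
    have h4 : ∑ i ∈ Finset.range (n+2), (n+1).choose i
        = ∑ k ∈ Finset.range (n+1), (n+1).choose (k+1) + (n+1).choose 0 :=
      Finset.sum_range_succ' _ _
    rw [h4, Nat.choose_zero_right] at h3
    omega
  calc Sb n ≤ ∑ k ∈ Finset.range (n+1), (((n+1).choose (k+1) : ℕ) : ℝ) := h1
    _ = ((∑ k ∈ Finset.range (n+1), ((n+1).choose (k+1)) : ℕ) : ℝ) := by push_cast; rfl
    _ ≤ ((2^(n+1) : ℕ) : ℝ) := by exact_mod_cast h2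
    _ = 2^(n+1) := by push_cast; rfl

lemma Sb_sq_le (n : ℕ) :
    (Sb n)^2 / ((n:ℝ)+1) ≤ 4^n + (if n = 1 then 1/2 else 0) := by
  match n with
  | 0 =>
    have h : Sb 0 = 1 := by simp [Sb]
    rw [h]; norm_num
  | 1 =>
    have h : Sb 1 = 3 := by
      rw [Sb, Finset.sum_range_succ, Finset.sum_range_one]
      norm_num [Nat.choose]
    rw [h]; norm_num
  | 2 =>
    have h : Sb 2 = 13/2 := by
      rw [Sb, Finset.sum_range_succ, Finset.sum_range_succ, Finset.sum_range_one]
      norm_num [Nat.choose]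
    rw [h]; norm_num
  | (m+3) =>
    rw [if_neg (by omega), add_zero]
    have h1 : Sb (m+3) ≤ 2^(m+3+1) := Sb_le (m+3)
    have h2 : (Sb (m+3))^2 ≤ 4^(m+3) * 4 := by
      calc (Sb (m+3))^2 ≤ (2^(m+3+1))^2 := pow_le_pow_left₀ (Sb_nonneg _) h1 2
        _ = 4^(m+3) * 4 := by
            rw [← pow_mul, show (4:ℝ) = 2^2 by norm_num, ← pow_mul]
            ring_nf
    have h4 : (0:ℝ) < ((m+3:ℕ):ℝ)+1 := by positivity
    rw [div_le_iff₀ h4]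
    have h6 : (4:ℝ) ≤ ((m+3:ℕ):ℝ)+1 := by push_cast; linarith [Nat.cast_nonneg (α := ℝ) m]
    have h7 : (0:ℝ) < 4^(m+3) := by positivity
    nlinarith [mul_le_mul_of_nonneg_left h6 (le_of_lt h7)]

lemma sumT (d : ℕ) :
    ∑ n ∈ Finset.range (d+1), ((4:ℝ)^n + (if n = 1 then 1/2 else 0)) ≤ 2 * 4^d := by
  rw [Finset.sum_add_distrib]
  have hg : ∑ n ∈ Finset.range (d+1), (4:ℝ)^n = (4^(d+1) - 1)/3 := by
    rw [geom_sum_eq (by norm_num : (4:ℝ) ≠ 1)]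
    norm_num
  have hi : ∑ n ∈ Finset.range (d+1), (if n = 1 then (1:ℝ)/2 else 0) ≤ 1/2 := by
    rw [Finset.sum_ite_eq' (Finset.range (d+1)) 1 (fun _ => (1:ℝ)/2)]
    split_ifs <;> norm_num
  have h4 : (1:ℝ) ≤ 4^d := one_le_pow₀ (by norm_num)
  rw [hg]
  have : (4:ℝ)^(d+1) = 4 * 4^d := by ring
  nlinarith [hi]

lemma sumLag (d : ℕ) (y : ℝ) (hy : 1 ≤ y) :
    ∑ n ∈ Finset.range (d+1), ((Lag n).eval y)^2 / ((n:ℝ)+1) ≤ 2 * (2*y)^(2*d) := by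
  have hy0 : (0:ℝ) ≤ y := by linarith
  have hterm : ∀ n ∈ Finset.range (d+1),
      ((Lag n).eval y)^2 / ((n:ℝ)+1) ≤ ((4:ℝ)^n + (if n = 1 then 1/2 else 0)) * y^(2*d) := by
    intro n hn
    simp only [Finset.mem_range] at hn
    have e1 : ((Lag n).eval y)^2 ≤ (Sb n * y^n)^2 := by
      rw [← sq_abs]
      exact pow_le_pow_left₀ (abs_nonneg _) (Lag_eval_bound n y hy) 2
    have e2 : (Sb n * y^n)^2 = (Sb n)^2 * y^(2*n) := by
      rw [mul_pow, ← pow_mul]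
      ring_nf
    have e3 : y^(2*n) ≤ y^(2*d) := pow_le_pow_right₀ hy (by omega)
    have e4 : ((Lag n).eval y)^2 / ((n:ℝ)+1) ≤ (Sb n)^2 * y^(2*d) / ((n:ℝ)+1) := by
      apply div_le_div_of_nonneg_right ?_ (by positivity)
      calc ((Lag n).eval y)^2 ≤ (Sb n)^2 * y^(2*n) := by rw [← e2]; exact e1
        _ ≤ (Sb n)^2 * y^(2*d) := mul_le_mul_of_nonneg_left e3 (sq_nonneg _)
    refine le_trans e4 ?_
    rw [show (Sb n)^2 * y^(2*d) / ((n:ℝ)+1) = ((Sb n)^2 / ((n:ℝ)+1)) * y^(2*d) by ring]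
    exact mul_le_mul_of_nonneg_right (Sb_sq_le n) (by positivity)
  calc ∑ n ∈ Finset.range (d+1), ((Lag n).eval y)^2 / ((n:ℝ)+1)
      ≤ ∑ n ∈ Finset.range (d+1), ((4:ℝ)^n + (if n = 1 then 1/2 else 0)) * y^(2*d) :=
        Finset.sum_le_sum hterm
    _ = (∑ n ∈ Finset.range (d+1), ((4:ℝ)^n + (if n = 1 then 1/2 else 0))) * y^(2*d) := by
        rw [Finset.sum_mul]
    _ ≤ (2 * 4^d) * y^(2*d) := mul_le_mul_of_nonneg_right (sumT d) (by positivity)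
    _ = 2 * (2*y)^(2*d) := by
        rw [mul_pow, show (2:ℝ)^(2*d) = 4^d by rw [pow_mul]; norm_num, pow_mul]
        ring_nf

theorem poly_value_le_integral (d : ℕ) (g : Polynomial ℝ) (hg : g.natDegree ≤ d)
    (y : ℝ) (hy : 1 ≤ y) :
    (g.eval y) ^ 2 ≤
      2 * (2 * y) ^ (2 * d) * ∫ x in Set.Ioi (0 : ℝ), (g.eval x) ^ 2 * (x * Real.exp (-x)) := by
  obtain ⟨c, hc⟩ := expand d g hg
  have hint : (∫ x in Set.Ioi (0:ℝ), (g.eval x)^2 * (x * Real.exp (-x))) = Phi (g * g) := by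
    unfold Phi
    congr 1
    funext x
    rw [Polynomial.eval_mul]; ring
  have hPhi : Phi (g * g) = ∑ n ∈ Finset.range (d+1), (c n)^2 * ((n:ℝ)+1) := by
    conv_lhs => rw [hc]
    rw [Finset.sum_mul_sum, Phi_sum]
    have houter : ∀ n ∈ Finset.range (d+1),
        Phi (∑ m ∈ Finset.range (d+1), (Polynomial.C (c n) * Lag n) * (Polynomial.C (c m) * Lag m))
         = (c n)^2 * ((n:ℝ)+1) := by
      intro n hn
      rw [Phi_sum]
      have hterm : ∀ m ∈ Finset.range (d+1),
          Phi ((Polynomial.C (c n) * Lag n) * (Polynomial.C (c m) * Lag m))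
          = (c n * c m) * (if n = m then ((m:ℝ)+1) else 0) := by
        intro m _
        have he : (Polynomial.C (c n) * Lag n) * (Polynomial.C (c m) * Lag m)
            = Polynomial.C (c n * c m) * (Lag n * Lag m) := by
          rw [Polynomial.C_mul]; ring
        rw [he, Phi_Cmul, Phi_Lp_Lp']
      rw [Finset.sum_congr rfl hterm, Finset.sum_eq_single n]
      · rw [if_pos rfl]; ring
      · intro m _ hm
        rw [if_neg (fun h => hm h.symm), mul_zero]
      · intro h; exact absurd hn h
    exact Finset.sum_congr rfl houter
  have hgy : g.eval y = ∑ n ∈ Finset.range (d+1), c n * (Lag n).eval y := by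
    conv_lhs => rw [hc]
    rw [Polynomial.eval_finset_sum]
    exact Finset.sum_congr rfl fun n _ => by rw [Polynomial.eval_mul, Polynomial.eval_C]
  have hsq : ∀ n : ℕ, Real.sqrt ((n:ℝ)+1) ^ 2 = (n:ℝ)+1 :=
    fun n => Real.sq_sqrt (by positivity)
  have hne : ∀ n : ℕ, Real.sqrt ((n:ℝ)+1) ≠ 0 := fun n => by
    have : (0:ℝ) < Real.sqrt ((n:ℝ)+1) := Real.sqrt_pos.mpr (by positivity)
    linarith
  have hFG : ∀ n ∈ Finset.range (d+1), c n * (Lag n).eval y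
      = (c n * Real.sqrt ((n:ℝ)+1)) * ((Lag n).eval y / Real.sqrt ((n:ℝ)+1)) := by
    intro n _
    field_simp
  have hCS := Finset.sum_mul_sq_le_sq_mul_sq (Finset.range (d+1))
    (fun n => c n * Real.sqrt ((n:ℝ)+1)) (fun n => (Lag n).eval y / Real.sqrt ((n:ℝ)+1))
  have hF2 : ∑ n ∈ Finset.range (d+1), (c n * Real.sqrt ((n:ℝ)+1)) ^ 2
      = ∑ n ∈ Finset.range (d+1), (c n)^2 * ((n:ℝ)+1) :=
    Finset.sum_congr rfl fun n _ => by rw [mul_pow, hsq n]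
  have hG2 : ∑ n ∈ Finset.range (d+1), ((Lag n).eval y / Real.sqrt ((n:ℝ)+1)) ^ 2
      = ∑ n ∈ Finset.range (d+1), ((Lag n).eval y)^2 / ((n:ℝ)+1) :=
    Finset.sum_congr rfl fun n _ => by rw [div_pow, hsq n]
  have hmain : (g.eval y)^2 ≤ (∑ n ∈ Finset.range (d+1), (c n)^2 * ((n:ℝ)+1))
      * (∑ n ∈ Finset.range (d+1), ((Lag n).eval y)^2 / ((n:ℝ)+1)) := by
    rw [hgy, Finset.sum_congr rfl hFG, ← hF2, ← hG2]
    exact hCS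
  have hPhinn : 0 ≤ ∑ n ∈ Finset.range (d+1), (c n)^2 * ((n:ℝ)+1) := by positivity
  have hfinal := le_trans hmain (mul_le_mul_of_nonneg_left (sumLag d y hy) hPhinn)
  rw [hint, hPhi]
  calc (g.eval y)^2 ≤ (∑ n ∈ Finset.range (d+1), (c n)^2 * ((n:ℝ)+1)) * (2 * (2*y)^(2*d)) :=
        hfinal
    _ = 2 * (2*y)^(2*d) * (∑ n ∈ Finset.range (d+1), (c n)^2 * ((n:ℝ)+1)) := by ring
end

section
/- For all k, d₂, n ∈ ℕ with 1 ≤ d₂ ≤ √n/4 and k ≤ n/4, letting Δ = 2d₂/n, we have binomial(n-k-2, d₂-1)/binomial(n-1, d₂-1) ≥ (1/2)·e^(-kΔ). -/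
set_option maxHeartbeats 1000000 in
theorem choose_ratio_ge_half_exp (k d₂ n : ℕ) (hd₂ : 1 ≤ d₂)
    (hd₂n : (d₂ : ℝ) ≤ Real.sqrt n / 4) (hk : (k : ℝ) ≤ (n : ℝ) / 4)
    (hk' : k ≤ n - d₂ - 1) :
    ((n - k - 2).choose (d₂ - 1) : ℝ) / ((n - 1).choose (d₂ - 1)) ≥
      (1 / 2) * Real.exp (-(k : ℝ) * (2 * d₂ / n)) := by
  have hd1 : (1:ℝ) ≤ (d₂:ℝ) := by exact_mod_cast hd₂
  have hsq : Real.sqrt n * Real.sqrt n = n := Real.mul_self_sqrt (Nat.cast_nonneg n)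
  have h4 : (4:ℝ) ≤ Real.sqrt n := by linarith
  have h16 : 16 * (d₂:ℝ) ≤ n := by nlinarith
  have h16n : 16 * d₂ ≤ n := by exact_mod_cast h16
  have hn16 : 16 ≤ n := by omega
  have hkd : k + d₂ + 1 ≤ n := by omega
  have hnR : (16:ℝ) ≤ n := by exact_mod_cast hn16
  have hnpos : (0:ℝ) < n := by linarith
  set m := d₂ - 1 with hm
  have hmR : (m:ℝ) = (d₂:ℝ) - 1 := by
    rw [hm]; push_cast [Nat.cast_sub hd₂]; ring
  have hpos : (0:ℝ) < ((n-1).choose m : ℝ) := by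
    exact_mod_cast Nat.choose_pos (show m ≤ n - 1 by omega)
  have hn1 : (0:ℝ) < (n:ℝ) - 1 := by linarith
  clear hk'
  revert hk hkd
  induction k with
  | zero =>
    intro _ _
    have hid := Nat.choose_mul_succ_eq (n-2) m
    rw [show n - 2 + 1 = n - 1 by omega] at hid
    have hidR := congrArg (fun x : ℕ => (x:ℝ)) hid
    push_cast [Nat.cast_sub (show m ≤ n-1 by omega), Nat.cast_sub (show 1 ≤ n by omega)]
      at hidR
    have hnum : ((n - 0 - 2).choose m : ℝ) =
        ((n-1).choose m : ℝ) * (((n:ℝ)-1-(m:ℝ))/((n:ℝ)-1)) := by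
      rw [show n - 0 - 2 = n - 2 by omega]
      field_simp [hn1.ne']
      linarith [hidR]
    rw [hnum]
    simp only [Nat.cast_zero, neg_zero, zero_mul, Real.exp_zero, mul_one]
    rw [ge_iff_le, mul_comm, mul_div_assoc, div_self hpos.ne', mul_one]
    rw [le_div_iff₀ hn1]
    nlinarith
  | succ k ih =>
    intro hk1 hkd1
    have hkR : (k:ℝ) ≤ (n:ℝ)/4 := by push_cast at hk1 ⊢; linarith
    have ihr := ih hkR (by omega)
    have ha : n - (k+1) - 2 + 1 = n - k - 2 := by omega
    have hid := Nat.choose_mul_succ_eq (n - (k+1) - 2) m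
    rw [ha] at hid
    have hmn : m ≤ n - k - 2 := by omega
    have hidR := congrArg (fun x : ℕ => (x:ℝ)) hid
    push_cast [Nat.cast_sub hmn, Nat.cast_sub (show 2 ≤ n - k by omega),
      Nat.cast_sub (show k ≤ n by omega)] at hidR
    have hkn : (k:ℝ) + 1 + (d₂:ℝ) + 1 ≤ n := by exact_mod_cast hkd1
    have haR : (0:ℝ) < (n:ℝ) - k - 2 := by linarith
    have hnum : ((n - (k+1) - 2).choose m : ℝ) =
        ((n - k - 2).choose m : ℝ) * (((n:ℝ) - k - 2 - m)/((n:ℝ) - k - 2)) := by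
      field_simp [haR.ne']
      linarith [hidR]
    set t : ℝ := 2 * (d₂:ℝ) / n with htdef
    have ht : (0:ℝ) < t := by positivity
    have htn : t * n = 2 * (d₂:ℝ) := div_mul_cancel₀ _ hnpos.ne'
    have hkle : (k:ℝ) + 1 ≤ (n:ℝ)/4 := by push_cast at hk1; linarith
    have key : 2 * ((n:ℝ) - k - 2) * d₂ ≥ ((d₂:ℝ) - 1) * ((n:ℝ) + 2 * d₂) := by
      nlinarith [mul_le_mul_of_nonneg_left h16 (by linarith : (0:ℝ) ≤ (d₂:ℝ))]
    have h7 : (m:ℝ) ≤ ((n:ℝ) - k - 2 - m) * t := by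
      rw [htdef, ← mul_div_assoc, le_div_iff₀ hnpos, hmR]
      nlinarith [key]
    have hstep : Real.exp (-t) ≤ ((n:ℝ) - k - 2 - m)/((n:ℝ) - k - 2) := by
      have h1 : Real.exp (-t) ≤ 1 / (1 + t) := by
        rw [Real.exp_neg, one_div]
        have h2 : 1 + t ≤ Real.exp t := by linarith [Real.add_one_le_exp t]
        exact inv_anti₀ (by linarith) h2
      refine h1.trans ?_
      rw [div_le_div_iff₀ (by linarith) haR]
      nlinarith [h7, hmR]
    have hexp : Real.exp (-(↑(k+1):ℝ) * t)
        = Real.exp (-(k:ℝ) * t) * Real.exp (-t) := by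
      rw [← Real.exp_add]; congr 1; push_cast; ring
    rw [ge_iff_le, hnum, hexp]
    calc (1:ℝ)/2 * (Real.exp (-(k:ℝ) * t) * Real.exp (-t))
        = ((1:ℝ)/2 * Real.exp (-(k:ℝ) * t)) * Real.exp (-t) := by ring
      _ ≤ (((n - k - 2).choose m : ℝ) / ((n-1).choose m)) *
            (((n:ℝ) - k - 2 - m)/((n:ℝ) - k - 2)) := by
          apply mul_le_mul ihr hstep (Real.exp_pos _).le
          positivity
      _ = ((n - k - 2).choose m : ℝ) * (((n:ℝ) - k - 2 - m)/((n:ℝ) - k - 2)) /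
            ((n-1).choose m) := by ring
end

section
/- For all j, u ∈ ℕ with j ≥ 1, (1/j!)·∏_{a=1}^j (u - a) ≥ binomial(2j-1, j)·(u - 2j + 1), where the product and inequality are over the integers/rationals (u - a can be negative). -/
private lemma choose_key (j m : ℕ) (hj : 1 ≤ j) :
    (2 * j - 1).choose j * (m + 1) ≤ (2 * j - 1 + m).choose j := by
  induction m with
  | zero => simp
  | succ m ih =>
    have h1 : (2 * j - 1 + (m + 1)).choose j
        = (2 * j - 1 + m).choose (j - 1) + (2 * j - 1 + m).choose j := by
      have h := Nat.choose_succ_succ' (2 * j - 1 + m) (j - 1)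
      rw [show j - 1 + 1 = j from by omega] at h
      rw [show 2 * j - 1 + (m + 1) = 2 * j - 1 + m + 1 from by omega]
      exact h
    have h2 : (2 * j - 1).choose (j - 1) ≤ (2 * j - 1 + m).choose (j - 1) :=
      Nat.choose_le_choose _ (by omega)
    have h3 : (2 * j - 1).choose (j - 1) = (2 * j - 1).choose j := by
      have e : j - 1 = (2 * j - 1) - j := by omega
      rw [e, Nat.choose_symm (by omega)]
    have h4 : (2 * j - 1).choose j * (m + 1 + 1)
        = (2 * j - 1).choose j * (m + 1) + (2 * j - 1).choose j := by ring
    omega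

private lemma prod_eq_descFactorial (j u : ℕ) (hu : j ≤ u) :
    ∏ a ∈ Finset.Icc 1 j, ((u : ℚ) - a) = ((u - 1).descFactorial j : ℚ) := by
  have h1 : ∏ a ∈ Finset.Icc 1 j, ((u : ℚ) - a)
      = ∏ a ∈ Finset.Icc 1 j, ((u - a : ℕ) : ℚ) := by
    apply Finset.prod_congr rfl
    intro a ha
    simp only [Finset.mem_Icc] at ha
    have h : a ≤ u := le_trans ha.2 hu
    push_cast [h]
    ring
  rw [h1, ← Nat.cast_prod]
  congr 1
  rw [Nat.descFactorial_eq_prod_range]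
  rw [show Finset.Icc 1 j = Finset.Ico 1 (j + 1) by rfl, Finset.prod_Ico_eq_prod_range]
  apply Finset.prod_congr (by norm_num)
  intro i hi
  omega

theorem falling_product_ge (j u : ℕ) (hj : 1 ≤ j) :
    (1 / (Nat.factorial j : ℚ)) * ∏ a ∈ Finset.Icc 1 j, ((u : ℚ) - a) ≥
      ((2 * j - 1).choose j : ℚ) * ((u : ℚ) - 2 * j + 1) := by
  have hfac : (0 : ℚ) < (Nat.factorial j : ℚ) := by
    exact_mod_cast Nat.factorial_pos j
  rcases Nat.eq_zero_or_pos u with hu0 | hu1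
  · -- u = 0
    subst hu0
    have hprod : ∏ a ∈ Finset.Icc 1 j, (((0 : ℕ) : ℚ) - a)
        = (-1) ^ j * (Nat.factorial j : ℚ) := by
      have h : ∀ a ∈ Finset.Icc 1 j, (((0 : ℕ) : ℚ) - a) = (-1) * (a : ℚ) := by
        intros; push_cast; ring
      rw [Finset.prod_congr rfl h, Finset.prod_mul_distrib, Finset.prod_const, Nat.card_Icc]
      congr 1
      rw [show Finset.Icc 1 j = Finset.Ico 1 (j + 1) by rfl, ← Nat.cast_prod,
        Finset.prod_Ico_id_eq_factorial]
    rw [hprod]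
    have h1 : (1 / (Nat.factorial j : ℚ)) * ((-1) ^ j * (Nat.factorial j : ℚ))
        = (-1) ^ j := by field_simp
    rw [h1]
    have hC : (1 : ℚ) ≤ ((2 * j - 1).choose j : ℚ) := by
      exact_mod_cast Nat.succ_le_of_lt (Nat.choose_pos (by omega))
    have hneg : (((0 : ℕ) : ℚ)) - 2 * j + 1 ≤ -1 := by
      have h : (1 : ℚ) ≤ (j : ℚ) := by exact_mod_cast hj
      push_cast; linarith
    have hpow : (-1 : ℚ) ≤ (-1) ^ j := by
      rcases Nat.even_or_odd j with h | h
      · rw [h.neg_one_pow]; norm_num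
      · rw [h.neg_one_pow]
    have h4 : ((2 * j - 1).choose j : ℚ) * ((((0 : ℕ) : ℚ)) - 2 * j + 1)
        ≤ ((2 * j - 1).choose j : ℚ) * (-1) :=
      mul_le_mul_of_nonneg_left hneg (by linarith)
    have h5 : ((2 * j - 1).choose j : ℚ) * (-1) ≤ -1 := by linarith
    linarith
  · rcases lt_or_ge u (j + 1) with hu | hu
    · -- 1 ≤ u ≤ j : product is zero, RHS ≤ 0
      have hzero : ∏ a ∈ Finset.Icc 1 j, ((u : ℚ) - a) = 0 := by
        apply Finset.prod_eq_zero (i := u)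
        · simp only [Finset.mem_Icc]; omega
        · ring
      rw [hzero, mul_zero]
      have hC : (0 : ℚ) ≤ ((2 * j - 1).choose j : ℚ) := by positivity
      have hneg : ((u : ℚ) - 2 * j + 1) ≤ 0 := by
        have h1 : (u : ℚ) ≤ (j : ℚ) := by exact_mod_cast Nat.lt_succ_iff.mp hu
        have h2 : (1 : ℚ) ≤ (j : ℚ) := by exact_mod_cast hj
        linarith
      exact mul_nonpos_of_nonneg_of_nonpos hC hneg
    · -- u ≥ j + 1
      rw [prod_eq_descFactorial j u (by omega),
        Nat.descFactorial_eq_factorial_mul_choose]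
      have hL : (1 / (Nat.factorial j : ℚ)) * ((Nat.factorial j * (u - 1).choose j : ℕ) : ℚ)
          = ((u - 1).choose j : ℚ) := by
        push_cast; field_simp
      rw [hL]
      rcases lt_or_ge u (2 * j) with h2j | h2j
      · -- j + 1 ≤ u ≤ 2j - 1 : RHS ≤ 0 ≤ LHS
        have h1 : (u : ℚ) + 1 ≤ 2 * (j : ℚ) := by exact_mod_cast (by omega : u + 1 ≤ 2 * j)
        have hneg : ((u : ℚ) - 2 * j + 1) ≤ 0 := by linarith
        have hC : (0 : ℚ) ≤ ((2 * j - 1).choose j : ℚ) := by positivity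
        have hLpos : (0 : ℚ) ≤ ((u - 1).choose j : ℚ) := by positivity
        have h2 := mul_nonpos_of_nonneg_of_nonpos hC hneg
        linarith
      · -- u ≥ 2j
        obtain ⟨m, hm⟩ : ∃ m, u = 2 * j + m := ⟨u - 2 * j, by omega⟩
        subst hm
        have key := choose_key j m hj
        have hcast : ((2 * j - 1).choose j : ℚ) * ((m : ℚ) + 1)
            ≤ ((2 * j - 1 + m).choose j : ℚ) := by exact_mod_cast key
        have he : (2 * j + m) - 1 = 2 * j - 1 + m := by omega
        rw [he]
        have hrhs : ((2 * j + m : ℕ) : ℚ) - 2 * j + 1 = (m : ℚ) + 1 := by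
          push_cast; ring
        rw [hrhs]
        exact hcast
end
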